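/- For a free tree T and any edge uv, letting f(u,v) = (deg(u) − j)·n_u(v) + Σ_{i=1}^{j} s_i(u), where j is the rank of the subtree containing v among the immediate subtrees of T rooted at u sorted non-increasingly by size, s_i(u) is the size of the i-th largest immediate subtree of T rooted at u, and n_u(v) is the size of the component of v when uv is removed, the following holds: D_max^pr(T^v) − D_max^pr(T^u) = f(v,u) − f(u,v). -/

import Mathlib

open SimpleGraph

attribute [local instance] Classical.propDecidable

/-- Length of an edge (as an unordered pair) in an arrangement. -/
noncomputable def edgeLen {V : Type*} [Fintype V] (π : V ≃ Fin (Fintype.card V)) :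
    Sym2 V → ℕ :=
  Sym2.lift ⟨fun u v => ((π u : ℤ) - (π v : ℤ)).natAbs, fun u v => by
    simp only []; omega⟩

/-- Cost of a linear arrangement: sum of edge lengths. -/
noncomputable def cost {V : Type*} [Fintype V] (G : SimpleGraph V)
    (π : V ≃ Fin (Fintype.card V)) : ℕ :=
  ∑ᶠ e ∈ G.edgeSet, edgeLen π e

/-- An arrangement is planar if no two edges cross. -/
def Planar {V : Type*} [Fintype V] (G : SimpleGraph V)
    (π : V ≃ Fin (Fintype.card V)) : Prop :=
  ∀ ⦃s t u v : V⦄, G.Adj s t → G.Adj u v → π s < π t → π u < π v → π s < π u →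
    ¬(π u < π t ∧ π t < π v)

/-- An arrangement of a tree rooted at `r` is projective if it is planar and no
edge covers the root. -/
def Projective {V : Type*} [Fintype V] (G : SimpleGraph V) (r : V)
    (π : V ≃ Fin (Fintype.card V)) : Prop :=
  Planar G π ∧ ∀ ⦃u v : V⦄, G.Adj u v → ¬(π u < π r ∧ π r < π v)

noncomputable def maxCost {V : Type*} [Fintype V] (G : SimpleGraph V) : ℕ :=
  sSup {c | ∃ π : V ≃ Fin (Fintype.card V), cost G π = c}

noncomputable def maxPlanar {V : Type*} [Fintype V] (G : SimpleGraph V) : ℕ :=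
  sSup {c | ∃ π : V ≃ Fin (Fintype.card V), Planar G π ∧ cost G π = c}

noncomputable def maxProj {V : Type*} [Fintype V] (G : SimpleGraph V) (r : V) : ℕ :=
  sSup {c | ∃ π : V ≃ Fin (Fintype.card V), Projective G r π ∧ cost G π = c}

/-- `compSize G u v` : the number of vertices of the connected component of `v`
after removing the edge `uv` (this is `n_u(v)`). -/
noncomputable def compSize {V : Type*} [Fintype V] (G : SimpleGraph V) (u v : V) : ℕ :=
  Nat.card {y : V // (G.deleteEdges {s(u, v)}).Reachable v y}

/-- The star graph: the vertex with value `0` (the hub) is adjacent to all others. -/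
def starGraph (n : ℕ) : SimpleGraph (Fin n) :=
  SimpleGraph.fromRel (fun i _ => (i : ℕ) = 0)

set_option linter.unusedSectionVars false
set_option linter.unusedVariables false
set_option maxHeartbeats 1000000

/-! ### Auxiliary development -/

namespace MaxProjAux

variable {V : Type} [Fintype V]

/-- The vertex set of the component of `v` after deleting edge `uv`. -/
def Kset (G : SimpleGraph V) (u v : V) : Set V :=
  {y | (G.deleteEdges {s(u, v)}).Reachable v y}

lemma mem_Kset_self (G : SimpleGraph V) (u v : V) : v ∈ Kset G u v :=
  Reachable.refl v

lemma compSize_eq_card (G : SimpleGraph V) (u v : V) :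
    compSize G u v = Fintype.card (Kset G u v) := by
  rw [compSize, ← Nat.card_eq_fintype_card]
  rfl

structure NbrEnum (G : SimpleGraph V) (r : V) (k : ℕ) (c : Fin k → V) : Prop where
  inj : Function.Injective c
  adj : ∀ i, G.Adj r (c i)
  surj : ∀ x, G.Adj r x → ∃ i, c i = x
  mono : ∀ i j : Fin k, i ≤ j → compSize G r (c j) ≤ compSize G r (c i)

noncomputable def subMax (G : SimpleGraph V) (r x : V) : ℕ :=
  maxProj (G.induce (Kset G r x)) ⟨x, mem_Kset_self G r x⟩

/-! #### Walk lemmas -/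

lemma walk_cross {H : SimpleGraph V} (π : V ≃ Fin (Fintype.card V)) {x y : V}
    (W : H.Walk x y) (t : ℕ) (hx : (π x : ℕ) ≤ t) (hy : t ≤ (π y : ℕ)) :
    (∃ z ∈ W.support, (π z : ℕ) = t) ∨
    ∃ a b, s(a, b) ∈ W.edges ∧ (π a : ℕ) < t ∧ t < (π b : ℕ) := by
  induction W with
  | nil => exact Or.inl ⟨_, by simp, le_antisymm hx hy⟩
  | @cons x x₁ y h W ih =>
    rcases eq_or_lt_of_le hx with hx' | hx'
    · exact Or.inl ⟨x, by simp, hx'⟩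
    by_cases h1 : t ≤ (π x₁ : ℕ)
    · rcases eq_or_lt_of_le h1 with h1' | h1'
      · exact Or.inl ⟨x₁, by simp, h1'.symm⟩
      · exact Or.inr ⟨x, x₁, by simp, hx', h1'⟩
    · rcases ih (le_of_not_ge h1) hy with ⟨z, hz, hzt⟩ | ⟨a, b, he, hab⟩
      · exact Or.inl ⟨z, by simp [hz], hzt⟩
      · exact Or.inr ⟨a, b, by simp [he], hab⟩

lemma walk_exit {H : SimpleGraph V} (π : V ≃ Fin (Fintype.card V)) {x y : V}
    (W : H.Walk x y) (α β : ℕ) (hx : α < (π x : ℕ) ∧ (π x : ℕ) < β)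
    (hy : ¬(α < (π y : ℕ) ∧ (π y : ℕ) < β))
    (hsup : ∀ z ∈ W.support, (π z : ℕ) ≠ α ∧ (π z : ℕ) ≠ β) :
    ∃ a b, s(a, b) ∈ W.edges ∧ (α < (π a : ℕ) ∧ (π a : ℕ) < β) ∧
      ((π b : ℕ) < α ∨ β < (π b : ℕ)) := by
  induction W with
  | nil => exact absurd hx hy
  | @cons x x₁ y h W ih =>
    by_cases h1 : α < (π x₁ : ℕ) ∧ (π x₁ : ℕ) < β
    · rcases ih h1 hy (fun z hz => hsup z (by simp [hz])) with ⟨a, b, he, hab⟩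
      exact ⟨a, b, by simp [he], hab⟩
    · refine ⟨x, x₁, by simp, hx, ?_⟩
      have := hsup x₁ (by simp)
      omega

/-! #### Tree component facts -/

variable {G : SimpleGraph V} {r u v w x y z : V}

lemma deleteEdges_singleton_eq (G : SimpleGraph V) (e : Sym2 V) :
    G.deleteEdges {e} = G \ fromEdgeSet {e} := by
  ext a b
  simp only [deleteEdges_adj, sdiff_adj, fromEdgeSet_adj, Set.mem_singleton_iff]
  constructor
  · rintro ⟨h1, h2⟩; exact ⟨h1, fun hc => h2 hc.1⟩
  · rintro ⟨h1, h2⟩; exact ⟨h1, fun hc => h2 ⟨hc, h1.ne⟩⟩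

lemma not_reachable_delete (hG : G.IsTree) (huv : G.Adj u v) :
    ¬ (G.deleteEdges {s(u, v)}).Reachable u v := by
  have hb : G.IsBridge s(u, v) := isAcyclic_iff_forall_adj_isBridge.mp hG.IsAcyclic huv
  rw [isBridge_iff] at hb
  exact hb

lemma not_mem_Kset (hG : G.IsTree) (huv : G.Adj u v) : u ∉ Kset G u v := by
  intro h
  exact not_reachable_delete hG huv (Reachable.symm h)

lemma Kset_support (W : (G.deleteEdges {s(u, v)}).Walk v y) :
    ∀ z ∈ W.support, z ∈ Kset G u v := by
  classical
  intro z hz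
  exact ⟨W.takeUntil z hz⟩

lemma mem_Kset_of_adj (hy : y ∈ Kset G u v) (hyu : y ≠ u) (hadj : G.Adj y z) (hz : z ≠ u) :
    z ∈ Kset G u v := by
  refine Reachable.trans hy (Adj.reachable ?_)
  rw [deleteEdges_adj]
  refine ⟨hadj, ?_⟩
  simp only [Set.mem_singleton_iff, Sym2.eq, Sym2.rel_iff', Prod.mk.injEq, Prod.swap_prod_mk]
  rintro (⟨rfl, rfl⟩ | ⟨rfl, rfl⟩)
  · exact hyu rfl
  · exact hz rfl

lemma exists_mem_Kset (hG : G.IsTree) (hx : x ≠ r) :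
    ∃ w, G.Adj r w ∧ x ∈ Kset G r w := by
  classical
  obtain ⟨W⟩ := hG.isConnected.preconnected r x
  obtain ⟨p, hp⟩ : ∃ p : G.Walk r x, p.IsPath := ⟨W.toPath.1, W.toPath.2⟩
  cases p with
  | nil => exact absurd rfl hx
  | cons h W' =>
    rename_i w
    rw [Walk.cons_isPath_iff] at hp
    refine ⟨w, h, ⟨W'.transfer _ ?_⟩⟩
    intro e he
    rw [edgeSet_deleteEdges]
    refine ⟨W'.edges_subset_edgeSet he, ?_⟩
    simp only [Set.mem_singleton_iff]
    rintro rfl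
    exact hp.2 (W'.fst_mem_support_of_mem_edges he)

/-- A walk in `G.deleteEdges {s(u,v)}` starting in `Kset G u v` has all edges avoiding `u`,
so it transfers to any other single-edge deletion at `u`. -/
lemma walk_edges_avoid {a b : V} (hG : G.IsTree) (huv : G.Adj u v)
    (W : (G.deleteEdges {s(u, v)}).Walk a b) (ha : a ∈ Kset G u v) :
    ∀ e ∈ W.edges, e ∈ G.edgeSet ∧ u ∉ e := by
  intro e he
  have hsup : ∀ z ∈ W.support, z ∈ Kset G u v := by
    intro z hz
    exact Reachable.trans ha ⟨W.takeUntil z hz⟩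
  have hGe : e ∈ G.edgeSet := by
    have := W.edges_subset_edgeSet he
    rw [edgeSet_deleteEdges] at this
    exact this.1
  refine ⟨hGe, ?_⟩
  intro hue
  obtain ⟨c, rfl⟩ := Sym2.mem_iff_exists.mp hue
  exact not_mem_Kset hG huv (hsup u (W.fst_mem_support_of_mem_edges he))

lemma Kset_disjoint (hG : G.IsTree) (hw : G.Adj r w) (hw' : G.Adj r w') (hne : w ≠ w')
    (hx : x ∈ Kset G r w) : x ∉ Kset G r w' := by
  intro hx'
  obtain ⟨W2⟩ := hx'
  have hW2 : ∀ e ∈ W2.edges, e ∈ (G.deleteEdges {s(r, w)}).edgeSet := by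
    intro e he
    obtain ⟨hGe, hre⟩ := walk_edges_avoid hG hw' W2 (mem_Kset_self G r w') e he
    rw [edgeSet_deleteEdges]
    refine ⟨hGe, ?_⟩
    simp only [Set.mem_singleton_iff]
    rintro rfl
    exact hre (by simp)
  have hreach : (G.deleteEdges {s(r, w)}).Reachable w w' :=
    Reachable.trans hx ⟨(W2.transfer _ hW2).reverse⟩
  have : (G.deleteEdges {s(r, w)}).Reachable w r := by
    refine hreach.trans (Adj.reachable ?_)
    rw [deleteEdges_adj]
    refine ⟨hw'.symm, ?_⟩
    simp only [Set.mem_singleton_iff]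
    intro hcontra
    rw [Sym2.eq_iff] at hcontra
    rcases hcontra with ⟨h1, h2⟩ | ⟨h1, h2⟩
    · exact hw'.ne h1.symm
    · exact hne h1.symm
  exact not_mem_Kset hG hw this

lemma reach_induce {S : Set V} {H : SimpleGraph V} (hle : H ≤ G) :
    ∀ {a b : V} (W : H.Walk a b) (ha : a ∈ S) (hb : b ∈ S),
      (∀ z ∈ W.support, z ∈ S) → (G.induce S).Reachable ⟨a, ha⟩ ⟨b, hb⟩ := by
  intro a b W
  induction W with
  | nil => intro ha hb _; rfl
  | @cons a a₁ b h W ih =>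
    intro ha hb hsup
    have ha₁ : a₁ ∈ S := hsup a₁ (by simp)
    refine Reachable.trans (Adj.reachable ?_) (ih ha₁ hb (fun z hz => hsup z (by simp [hz])))
    exact hle h

lemma sum_compSize (hG : G.IsTree) {k : ℕ} {c : Fin k → V} (he : NbrEnum G r k c) :
    (∑ i, compSize G r (c i)) + 1 = Fintype.card V := by
  classical
  have hdisj : ∀ i j : Fin k, i ≠ j → ∀ x, x ∈ Kset G r (c i) → x ∉ Kset G r (c j) :=
    fun i j hij x hx =>
      Kset_disjoint hG (he.adj i) (he.adj j) (fun hc => hij (he.inj hc)) hx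
  have hr : ∀ i, r ∉ Kset G r (c i) := fun i => not_mem_Kset hG (he.adj i)
  have hcov : ∀ x : V, x ≠ r → ∃ i, x ∈ Kset G r (c i) := by
    intro x hx
    obtain ⟨w, hw, hxw⟩ := exists_mem_Kset hG hx
    obtain ⟨i, rfl⟩ := he.surj w hw
    exact ⟨i, hxw⟩
  have huniv : (Finset.univ : Finset V)
      = insert r (Finset.univ.biUnion fun i : Fin k => (Kset G r (c i)).toFinset) := by
    ext x
    simp only [Finset.mem_univ, true_iff, Finset.mem_insert, Finset.mem_biUnion,
      Set.mem_toFinset]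
    by_cases hx : x = r
    · exact Or.inl hx
    · exact Or.inr (by simpa using hcov x hx)
  have hcard : Fintype.card V = ((Finset.univ : Finset V)).card := (Finset.card_univ).symm
  rw [hcard, huniv, Finset.card_insert_of_notMem, Finset.card_biUnion]
  · simp [Set.toFinset_card, compSize_eq_card]
  · intro i _ j hj hij
    simp only [Finset.disjoint_left, Set.mem_toFinset]
    exact fun x hx => hdisj i j hij x hx
  · simp only [Finset.mem_biUnion, Finset.mem_univ, Set.mem_toFinset, not_exists]
    exact fun i hri => hr i hri.2

lemma isTree_induce_Kset (hG : G.IsTree) (hrw : G.Adj r w) :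
    (G.induce (Kset G r w)).IsTree := by
  constructor
  · rw [connected_iff]
    refine ⟨?_, ⟨⟨w, mem_Kset_self G r w⟩⟩⟩
    rintro ⟨a, ha⟩ ⟨b, hb⟩
    obtain ⟨Wa⟩ := id ha
    obtain ⟨Wb⟩ := id hb
    have h1 := reach_induce (G := G) (deleteEdges_le _) Wa (mem_Kset_self G r w) ha
      (Kset_support Wa)
    have h2 := reach_induce (G := G) (deleteEdges_le _) Wb (mem_Kset_self G r w) hb
      (Kset_support Wb)
    exact h1.symm.trans h2
  · intro x p hp
    have hmap : (p.map (Embedding.induce _).toHom).IsCycle :=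
      (Walk.map_isCycle_iff_of_injective (Subtype.val_injective)).mpr hp
    exact hG.IsAcyclic _ hmap

lemma Kset_subset_Kset (hG : G.IsTree) (huv : G.Adj u v) (hvx : G.Adj v x) (hxu : x ≠ u) :
    Kset G v x ⊆ Kset G u v := by
  intro y hy
  obtain ⟨W⟩ := hy
  have hxK : x ∈ Kset G u v :=
    mem_Kset_of_adj (mem_Kset_self G u v) huv.ne' hvx hxu
  refine Reachable.trans hxK ⟨W.transfer _ ?_⟩
  intro e he
  obtain ⟨hGe, hve⟩ := walk_edges_avoid hG hvx W (mem_Kset_self G v x) e he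
  rw [edgeSet_deleteEdges]
  refine ⟨hGe, ?_⟩
  simp only [Set.mem_singleton_iff]
  rintro rfl
  exact hve (by simp)

/-! #### Generic cost facts -/

noncomputable def edgesIn (G : SimpleGraph V) (S : Set V) : Finset (Sym2 V) :=
  G.edgeFinset.filter (fun e => ∀ x ∈ e, x ∈ S)

lemma cost_eq_sum (G : SimpleGraph V) (π : V ≃ Fin (Fintype.card V)) :
    cost G π = ∑ e ∈ G.edgeFinset, edgeLen π e := by
  classical
  rw [cost, show G.edgeSet = ↑G.edgeFinset from (Set.coe_toFinset _).symm,
    finsum_mem_coe_finset]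

lemma edgeLen_le (π : V ≃ Fin (Fintype.card V)) (e : Sym2 V) :
    edgeLen π e ≤ Fintype.card V := by
  induction e using Sym2.ind with
  | _ a b =>
    simp only [edgeLen, Sym2.lift_mk]
    have h1 := (π a).isLt
    have h2 := (π b).isLt
    omega

lemma cost_bdd (G : SimpleGraph V) (r : V) :
    BddAbove {c | ∃ π : V ≃ Fin (Fintype.card V), Projective G r π ∧ cost G π = c} := by
  classical
  refine ⟨G.edgeFinset.card * Fintype.card V, ?_⟩
  rintro n ⟨π, hπ, rfl⟩
  rw [cost_eq_sum]
  have := Finset.sum_le_card_nsmul G.edgeFinset (edgeLen π) (Fintype.card V)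
    (fun e _ => edgeLen_le π e)
  simpa using this

/-- cost of a sub-arrangement that preserves distances. -/
lemma cost_subarr {S : Set V} (G : SimpleGraph V) (π : V ≃ Fin (Fintype.card V))
    (σ : S ≃ Fin (Fintype.card S))
    (hdist : ∀ a b : S, ((σ a : ℤ) - (σ b : ℤ)).natAbs = ((π a.1 : ℤ) - (π b.1 : ℤ)).natAbs) :
    cost (G.induce S) σ = ∑ e ∈ edgesIn G S, edgeLen π e := by
  classical
  rw [cost_eq_sum]
  refine Finset.sum_bij (fun f _ => Sym2.map Subtype.val f) ?_ ?_ ?_ ?_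
  · intro f hf
    induction f using Sym2.ind with
    | _ a b =>
      rw [mem_edgeFinset] at hf
      simp only [edgesIn, Finset.mem_filter, mem_edgeFinset, Sym2.map_pair_eq]
      refine ⟨hf, ?_⟩
      intro y hy
      rw [Sym2.mem_iff] at hy
      rcases hy with rfl | rfl
      · exact a.2
      · exact b.2
  · intro f1 h1 f2 h2 hee
    exact Sym2.map.injective Subtype.val_injective hee
  · intro f hf
    simp only [edgesIn, Finset.mem_filter, mem_edgeFinset] at hf
    obtain ⟨hfe, hfS⟩ := hf
    induction f using Sym2.ind with
    | _ a b =>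
      have ha : a ∈ S := hfS a (by simp)
      have hb : b ∈ S := hfS b (by simp)
      refine ⟨s(⟨a, ha⟩, ⟨b, hb⟩), ?_, by simp⟩
      rw [mem_edgeFinset]
      exact hfe
  · intro f hf
    induction f using Sym2.ind with
    | _ a b =>
      simp only [Sym2.map_pair_eq, edgeLen, Sym2.lift_mk]
      exact hdist a b

lemma cost_decomp (hG : G.IsTree) {k : ℕ} {c : Fin k → V} (he : NbrEnum G r k c)
    (π : V ≃ Fin (Fintype.card V)) :
    cost G π = (∑ i : Fin k, ∑ e ∈ edgesIn G (Kset G r (c i)), edgeLen π e)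
      + ∑ i : Fin k, edgeLen π s(r, c i) := by
  classical
  rw [cost_eq_sum, ← Finset.sum_filter_add_sum_filter_not G.edgeFinset (fun e => r ∈ e)]
  rw [add_comm]
  congr 1
  · rcases Nat.eq_zero_or_pos k with hk | hk
    · subst hk
      simp only [Finset.univ_eq_empty, Finset.sum_empty]
      apply Finset.sum_eq_zero
      intro e he'
      exfalso
      simp only [Finset.mem_filter, mem_edgeFinset] at he'
      obtain ⟨hee, hre⟩ := he'
      induction e using Sym2.ind with
      | _ a b =>
        have ha : a ≠ r := fun hc => hre (by simp [hc])
        obtain ⟨w', hw', _⟩ := exists_mem_Kset hG ha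
        obtain ⟨i, _⟩ := he.surj w' hw'
        exact i.elim0
    · have hne0 : Nonempty (Fin k) := ⟨⟨0, hk⟩⟩
      have hblk : ∀ e ∈ G.edgeFinset.filter (fun e => ¬ r ∈ e),
          ∃ i, ∀ x ∈ e, x ∈ Kset G r (c i) := by
        intro e he'
        simp only [Finset.mem_filter, mem_edgeFinset] at he'
        obtain ⟨hee, hre⟩ := he'
        revert hee hre
        induction e using Sym2.ind with
        | _ a b =>
          intro hee hre
          have ha : a ≠ r := fun hc => hre (by simp [hc])
          have hb : b ≠ r := fun hc => hre (by simp [hc])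
          obtain ⟨w', hw', haw⟩ := exists_mem_Kset hG ha
          obtain ⟨i, rfl⟩ := he.surj w' hw'
          refine ⟨i, ?_⟩
          intro x hx
          rw [Sym2.mem_iff] at hx
          have hbK : b ∈ Kset G r (c i) :=
            mem_Kset_of_adj haw ha ((mem_edgeSet G).mp hee) hb
          rcases hx with rfl | rfl
          · exact haw
          · exact hbK
      set cls : Sym2 V → Fin k := fun e =>
        if h : ∃ i, ∀ x ∈ e, x ∈ Kset G r (c i) then h.choose else ⟨0, hk⟩ with hcls
      rw [← Finset.sum_fiberwise_of_maps_to
        (g := cls) (t := Finset.univ) (fun e _ => Finset.mem_univ _) (edgeLen π)]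
      apply Finset.sum_congr rfl
      intro i _
      congr 1
      ext e
      simp only [Finset.mem_filter, mem_edgeFinset, edgesIn]
      constructor
      · rintro ⟨⟨hee, hre⟩, hclse⟩
        have hex := hblk e (by simp only [Finset.mem_filter, mem_edgeFinset]; exact ⟨hee, hre⟩)
        refine ⟨hee, ?_⟩
        rw [hcls] at hclse
        simp only [dif_pos hex] at hclse
        exact hclse ▸ hex.choose_spec
      · rintro ⟨hee, hin⟩
        have hre : r ∉ e := fun hre => (not_mem_Kset hG (he.adj i)) (hin r hre)
        refine ⟨⟨hee, hre⟩, ?_⟩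
        have hex : ∃ j, ∀ x ∈ e, x ∈ Kset G r (c j) := ⟨i, hin⟩
        rw [hcls]
        simp only [dif_pos hex]
        by_contra hne
        have hx1 : e.out.1 ∈ e := Sym2.out_fst_mem e
        exact Kset_disjoint hG (he.adj hex.choose) (he.adj i)
          (fun hc => hne (he.inj hc)) (hex.choose_spec e.out.1 hx1) (hin e.out.1 hx1)
  · refine (Finset.sum_bij (fun (i : Fin k) _ => s(r, c i)) ?_ ?_ ?_ ?_).symm
    · intro i _
      simp only [Finset.mem_filter, mem_edgeFinset, mem_edgeSet]
      exact ⟨he.adj i, by simp⟩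
    · intro i _ j _ hij
      rw [Sym2.eq_iff] at hij
      rcases hij with ⟨-, h2⟩ | ⟨h1, h2⟩
      · exact he.inj h2
      · exact absurd h1 (he.adj j).ne
    · intro e hee
      simp only [Finset.mem_filter, mem_edgeFinset] at hee
      obtain ⟨hee, hre⟩ := hee
      obtain ⟨x, rfl⟩ := Sym2.mem_iff_exists.mp hre
      obtain ⟨i, rfl⟩ := he.surj x ((mem_edgeSet G).mp hee)
      exact ⟨i, Finset.mem_univ i, rfl⟩
    · intro i _
      rfl

/-! #### Transport lemmas -/

lemma Kset_induce_eq (hG : G.IsTree) (huv : G.Adj u v) (hvx : G.Adj v x) (hxu : x ≠ u)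
    (hxK : x ∈ Kset G u v) :
    Kset (G.induce (Kset G u v)) ⟨v, mem_Kset_self G u v⟩ ⟨x, hxK⟩
      = Subtype.val ⁻¹' (Kset G v x) := by
  have hsub : Kset G v x ⊆ Kset G u v := Kset_subset_Kset hG huv hvx hxu
  ext ⟨q, hq⟩
  simp only [Set.mem_preimage]
  constructor
  · rintro ⟨W⟩
    have key2 : ∀ (a b : Kset G u v)
        (_ : ((G.induce (Kset G u v)).deleteEdges
          {s((⟨v, mem_Kset_self G u v⟩ : Kset G u v), (⟨x, hxK⟩ : Kset G u v))}).Walk a b),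
        (G.deleteEdges {s(v, x)}).Reachable a.1 b.1 := by
      intro a b W
      induction W with
      | nil => exact Reachable.refl _
      | @cons a a₁ b h W ih =>
        refine Reachable.trans (Adj.reachable ?_) ih
        rw [deleteEdges_adj] at h ⊢
        obtain ⟨hadj, hne⟩ := h
        refine ⟨hadj, ?_⟩
        simp only [Set.mem_singleton_iff] at hne ⊢
        intro hc
        apply hne
        rw [Sym2.eq_iff] at hc ⊢
        rcases hc with ⟨h1, h2⟩ | ⟨h1, h2⟩
        · exact Or.inl ⟨Subtype.ext h1, Subtype.ext h2⟩
        · exact Or.inr ⟨Subtype.ext h1, Subtype.ext h2⟩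
    exact key2 _ _ W
  · intro hq'
    obtain ⟨W⟩ := id hq'
    have key : ∀ (a b : V) (W : (G.deleteEdges {s(v, x)}).Walk a b)
        (ha : a ∈ Kset G v x) (hb : b ∈ Kset G v x),
        ((G.induce (Kset G u v)).deleteEdges
          {s((⟨v, mem_Kset_self G u v⟩ : Kset G u v), (⟨x, hxK⟩ : Kset G u v))}).Reachable
          ⟨a, hsub ha⟩ ⟨b, hsub hb⟩ := by
      intro a b W
      induction W with
      | nil => intro _ _; rfl
      | @cons a a₁ b h W ih =>
        intro ha hb
        have ha₁ : a₁ ∈ Kset G v x := ha.trans h.reachable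
        refine Reachable.trans (Adj.reachable ?_) (ih ha₁ hb)
        rw [deleteEdges_adj] at h ⊢
        obtain ⟨hadj, hne⟩ := h
        refine ⟨hadj, ?_⟩
        simp only [Set.mem_singleton_iff] at hne ⊢
        intro hc
        apply hne
        have := congrArg (Sym2.map Subtype.val) hc
        simpa using this
    exact key x q W (mem_Kset_self G v x) hq'
  

lemma compSize_induce (hG : G.IsTree) (huv : G.Adj u v) (hvx : G.Adj v x) (hxu : x ≠ u)
    (hxK : x ∈ Kset G u v) :
    compSize (G.induce (Kset G u v)) ⟨v, mem_Kset_self G u v⟩ ⟨x, hxK⟩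
      = compSize G v x := by
  rw [compSize_eq_card, compSize_eq_card, Kset_induce_eq hG huv hvx hxu hxK]
  exact Fintype.card_congr (Equiv.subtypeSubtypeEquivSubtype
    (fun {a} (h : a ∈ Kset G v x) => Kset_subset_Kset hG huv hvx hxu h))

lemma maxProj_le_iso {W : Type} [Fintype W] {G : SimpleGraph V} {H : SimpleGraph W}
    (e : G ≃g H) (r : V) : maxProj G r ≤ maxProj H (e r) := by
  classical
  have hcard : Fintype.card V = Fintype.card W := Fintype.card_congr e.toEquiv
  rcases Set.eq_empty_or_nonempty
      {c | ∃ π : V ≃ Fin (Fintype.card V), Projective G r π ∧ cost G π = c} with hS | hS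
  · rw [maxProj, hS, csSup_empty]
    exact Nat.zero_le _
  · refine csSup_le hS ?_
    rintro n ⟨π, hπ, rfl⟩
    set π' : W ≃ Fin (Fintype.card W) :=
      e.symm.toEquiv.trans (π.trans (finCongr hcard)) with hπ'def
    have hval : ∀ w : W, (π' w : ℕ) = (π (e.symm w) : ℕ) := fun w => rfl
    have hlt : ∀ w w' : W, π' w < π' w' ↔ π (e.symm w) < π (e.symm w') := by
      intro w w'
      rw [Fin.lt_def, Fin.lt_def, hval, hval, ← Fin.lt_def]
    have hadj : ∀ w w' : W, H.Adj w w' → G.Adj (e.symm w) (e.symm w') := by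
      intro w w' h
      exact (Iso.map_adj_iff e.symm).mpr h
    have hproj : Projective H (e r) π' := by
      constructor
      · intro a b a' b' h1 h2 h3 h4 h5
        rw [hlt] at h3 h4 h5
        have := hπ.1 (hadj _ _ h1) (hadj _ _ h2) h3 h4 h5
        rw [hlt, hlt]
        tauto
      · intro a b h
        rw [hlt, hlt]
        simp only [Equiv.symm_apply_apply, RelIso.symm_apply_apply]
        exact hπ.2 (hadj _ _ h)
    have hcost : cost H π' = cost G π := by
      rw [cost_eq_sum, cost_eq_sum]
      refine (Finset.sum_bij (fun f _ => Sym2.map e f) ?_ ?_ ?_ ?_).symm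
      · intro f hf
        rw [mem_edgeFinset] at hf ⊢
        exact e.toHom.map_mem_edgeSet hf
      · intro f1 h1 f2 h2 hee
        exact Sym2.map.injective e.injective hee
      · intro f hf
        refine ⟨Sym2.map e.symm f, ?_, ?_⟩
        · rw [mem_edgeFinset] at hf ⊢
          exact e.symm.toHom.map_mem_edgeSet hf
        · induction f using Sym2.ind with
          | _ a b => simp
      · intro f hf
        induction f using Sym2.ind with
        | _ a b =>
          simp only [Sym2.map_pair_eq, edgeLen, Sym2.lift_mk]
          rw [hval, hval]
          simp
    refine le_csSup (cost_bdd H (e r)) ?_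
    exact ⟨π', hproj, hcost⟩

lemma maxProj_iso {W : Type} [Fintype W] {G : SimpleGraph V} {H : SimpleGraph W}
    (e : G ≃g H) (r : V) : maxProj G r = maxProj H (e r) := by
  refine le_antisymm (maxProj_le_iso e r) ?_
  have := maxProj_le_iso e.symm (e r)
  simpa using this

lemma subMax_induce (hG : G.IsTree) (huv : G.Adj u v) (hvx : G.Adj v x) (hxu : x ≠ u)
    (hxK : x ∈ Kset G u v) :
    subMax (G.induce (Kset G u v)) ⟨v, mem_Kset_self G u v⟩ ⟨x, hxK⟩
      = subMax G v x := by
  have hKeq := Kset_induce_eq hG huv hvx hxu hxK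
  have hsub : Kset G v x ⊆ Kset G u v := Kset_subset_Kset hG huv hvx hxu
  obtain ⟨φ, hφroot⟩ : ∃ φ : ((G.induce (Kset G u v)).induce
      (Kset (G.induce (Kset G u v)) ⟨v, mem_Kset_self G u v⟩ ⟨x, hxK⟩))
      ≃g G.induce (Kset G v x),
      (φ ⟨⟨x, hxK⟩, mem_Kset_self _ _ _⟩ : (Kset G v x)).1 = x := by
    refine ⟨⟨⟨fun a => ⟨a.1.1, (Set.ext_iff.mp hKeq _).mp a.2⟩,
      fun b => ⟨⟨b.1, hsub b.2⟩, (Set.ext_iff.mp hKeq _).mpr b.2⟩,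
      fun a => rfl, fun b => rfl⟩, fun {a b} => Iff.rfl⟩, rfl⟩
  rw [subMax, subMax, maxProj_iso φ]
  congr 1
  exact Subtype.ext hφroot

/-! #### Order-isomorphic sub-arrangement -/

lemma exists_subarr (π : V ≃ Fin (Fintype.card V)) (S : Set V)
    (conv : ∀ x z y : V, x ∈ S → z ∈ S → (π x : ℕ) < (π y : ℕ) → (π y : ℕ) < (π z : ℕ) →
      y ∈ S) :
    ∃ σ : S ≃ Fin (Fintype.card S), ∀ a b : S,
      (((σ a : ℕ) < (σ b : ℕ)) ↔ (π a.1 : ℕ) < (π b.1 : ℕ)) ∧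
      ((σ a : ℤ) - (σ b : ℤ)).natAbs = ((π a.1 : ℤ) - (π b.1 : ℤ)).natAbs ∧
      ((σ a : ℕ) + 1 = Fintype.card S ↔ ∀ b' : S, (π b'.1 : ℕ) ≤ (π a.1 : ℕ)) := by
  classical
  rcases Set.eq_empty_or_nonempty S with hS | hS
  · exact ⟨Fintype.equivFin _, fun a => absurd a.2 (Set.eq_empty_iff_forall_notMem.mp hS a.1)⟩
  set F : Finset (Fin (Fintype.card V)) := S.toFinset.image (fun x => π x) with hF
  have hmemF : ∀ a : S, π a.1 ∈ F := fun a =>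
    Finset.mem_image.mpr ⟨a.1, Set.mem_toFinset.mpr a.2, rfl⟩
  have hFne : F.Nonempty := by
    obtain ⟨x, hx⟩ := hS
    exact ⟨π x, hmemF ⟨x, hx⟩⟩
  set m := F.min' hFne with hm
  set M := F.max' hFne with hM
  have hmemF' : ∀ p : Fin (Fintype.card V), p ∈ F → π.symm p ∈ S := by
    intro p hp
    obtain ⟨x, hx, rfl⟩ := Finset.mem_image.mp hp
    simpa using Set.mem_toFinset.mp hx
  have hIcc : F = Finset.Icc m M := by
    apply Finset.Subset.antisymm
    · intro p hp
      exact Finset.mem_Icc.mpr ⟨F.min'_le p hp, F.le_max' p hp⟩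
    · intro p hp
      rw [Finset.mem_Icc] at hp
      rcases eq_or_lt_of_le hp.1 with h1 | h1
      · rw [← h1]; exact F.min'_mem hFne
      rcases eq_or_lt_of_le hp.2 with h2 | h2
      · rw [h2]; exact F.max'_mem hFne
      have hmm : π.symm m ∈ S := hmemF' m (F.min'_mem hFne)
      have hMM : π.symm M ∈ S := hmemF' M (F.max'_mem hFne)
      have hpS : π.symm p ∈ S := by
        refine conv _ _ _ hmm hMM ?_ ?_ <;> simp only [Equiv.apply_symm_apply]
        · exact h1
        · exact h2
      have : π (π.symm p) ∈ F := hmemF ⟨π.symm p, hpS⟩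
      simpa using this
  have hcardF : F.card = Fintype.card S := by
    rw [hF, Finset.card_image_of_injective _ π.injective, Set.toFinset_card]
  have hcard2 : (M : ℕ) + 1 - (m : ℕ) = Fintype.card S := by
    rw [← hcardF, hIcc, Fin.card_Icc]
  have hmle : ∀ a : S, (m : ℕ) ≤ (π a.1 : ℕ) := fun a => F.min'_le _ (hmemF a)
  have hMge : ∀ a : S, (π a.1 : ℕ) ≤ (M : ℕ) := fun a => F.le_max' _ (hmemF a)
  have hlt : ∀ a : S, (π a.1 : ℕ) - (m : ℕ) < Fintype.card S := by
    intro a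
    have h1 := hmle a
    have h2 := hMge a
    omega
  set f : S → Fin (Fintype.card S) := fun a => ⟨(π a.1 : ℕ) - (m : ℕ), hlt a⟩ with hfdef
  have hinj : Function.Injective f := by
    intro a b hab
    have h1 := hmle a
    have h2 := hmle b
    have h3 : ((π a.1 : ℕ) - (m : ℕ)) = ((π b.1 : ℕ) - (m : ℕ)) := congrArg Fin.val hab
    have : (π a.1 : ℕ) = (π b.1 : ℕ) := by omega
    exact Subtype.ext (π.injective (Fin.ext this))
  have hbij := (Fintype.bijective_iff_injective_and_card f).mpr ⟨hinj, by simp⟩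
  refine ⟨Equiv.ofBijective f hbij, ?_⟩
  intro a b
  have hσ : ∀ a : S, ((Equiv.ofBijective f hbij) a : ℕ) = (π a.1 : ℕ) - (m : ℕ) :=
    fun a => rfl
  have h1 := hmle a
  have h2 := hmle b
  have h3 := hMge a
  refine ⟨by rw [hσ, hσ]; omega, by rw [hσ, hσ]; omega, ?_⟩
  rw [hσ]
  constructor
  · intro hh b'
    have := hMge b'
    omega
  · intro hh
    have hMS : π.symm M ∈ S := hmemF' M (F.max'_mem hFne)
    have := hh ⟨π.symm M, hMS⟩
    simp only [Equiv.apply_symm_apply] at this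
    omega

/-! #### Convexity of components in projective arrangements -/

lemma reach_del_compl (hG : G.IsTree) (hrw : G.Adj r w) (hy : y ∉ Kset G r w) :
    (G.deleteEdges {s(r, w)}).Reachable r y := by
  by_cases hyr : y = r
  · subst hyr; rfl
  obtain ⟨w', hw', hyw'⟩ := exists_mem_Kset hG hyr
  have hwne : w' ≠ w := by
    rintro rfl
    exact hy hyw'
  obtain ⟨W⟩ := id hyw'
  have hWtrans : ∀ e ∈ W.edges, e ∈ (G.deleteEdges {s(r, w)}).edgeSet := by
    intro e he
    obtain ⟨hGe, hre⟩ := walk_edges_avoid hG hw' W (mem_Kset_self G r w') e he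
    rw [edgeSet_deleteEdges]
    refine ⟨hGe, ?_⟩
    simp only [Set.mem_singleton_iff]
    rintro rfl
    exact hre (by simp)
  have hadj : (G.deleteEdges {s(r, w)}).Adj r w' := by
    rw [deleteEdges_adj]
    refine ⟨hw', ?_⟩
    simp only [Set.mem_singleton_iff]
    intro hc
    rw [Sym2.eq_iff] at hc
    rcases hc with ⟨h1, h2⟩ | ⟨h1, h2⟩
    · exact hwne h2
    · exact hrw.ne h1
  exact (Adj.reachable hadj).trans ⟨W.transfer _ hWtrans⟩

lemma Kset_convex (hG : G.IsTree) {π : V ≃ Fin (Fintype.card V)}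
    (hπ : Projective G r π) (hrw : G.Adj r w) :
    ∀ x z y : V, x ∈ Kset G r w → z ∈ Kset G r w →
      (π x : ℕ) < (π y : ℕ) → (π y : ℕ) < (π z : ℕ) → y ∈ Kset G r w := by
  intro x z y hx hz hxy hyz
  by_contra hy
  obtain ⟨W1⟩ := id hx
  obtain ⟨W2⟩ := id hz
  have hsupK : ∀ a ∈ (W1.reverse.append W2).support, a ∈ Kset G r w := by
    intro a ha
    rw [Walk.support_append] at ha
    rcases List.mem_append.mp ha with h | h
    · exact Kset_support W1 a (by
        rw [Walk.support_reverse] at h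
        exact List.mem_reverse.mp h)
    · exact Kset_support W2 a (List.mem_of_mem_tail h)
  rcases walk_cross π (W1.reverse.append W2) (π y : ℕ) (le_of_lt hxy) (le_of_lt hyz) with
    ⟨z', hz', hz't⟩ | ⟨a, b, he, hab1, hab2⟩
  · have hzy : z' = y := π.injective (Fin.ext hz't)
    exact hy (hzy ▸ hsupK z' hz')
  · have haK : a ∈ Kset G r w := hsupK a ((W1.reverse.append W2).fst_mem_support_of_mem_edges he)
    have hbK : b ∈ Kset G r w := hsupK b ((W1.reverse.append W2).snd_mem_support_of_mem_edges he)
    have hadjab : G.Adj a b := by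
      have h := (W1.reverse.append W2).adj_of_mem_edges he
      rw [deleteEdges_adj] at h
      exact h.1
    by_cases hyr : y = r
    · subst hyr
      exact hπ.2 hadjab ⟨Fin.lt_def.mpr hab1, Fin.lt_def.mpr hab2⟩
    · have hreach : (G.deleteEdges {s(r, w)}).Reachable r y := reach_del_compl hG hrw hy
      obtain ⟨W3⟩ := hreach.symm
      have hsupY : ∀ a' ∈ W3.support, a' ∉ Kset G r w := by
        intro a' ha' haK'
        have hra' : (G.deleteEdges {s(r, w)}).Reachable r a' :=
          hreach.trans ⟨W3.takeUntil a' ha'⟩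
        have : (G.deleteEdges {s(r, w)}).Reachable r w := hra'.trans haK'.symm
        exact not_reachable_delete hG hrw this
      have hrab : ¬((π a : ℕ) < (π r : ℕ) ∧ (π r : ℕ) < (π b : ℕ)) := by
        intro hc
        exact hπ.2 hadjab ⟨Fin.lt_def.mpr hc.1, Fin.lt_def.mpr hc.2⟩
      obtain ⟨p, q, hpq, hpin, hqout⟩ := walk_exit π W3 (π a : ℕ) (π b : ℕ) ⟨hab1, hab2⟩
        hrab (by
          intro a' ha'
          constructor
          · intro hc
            exact hsupY a' ha' ((π.injective (Fin.ext hc)) ▸ haK)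
          · intro hc
            exact hsupY a' ha' ((π.injective (Fin.ext hc)) ▸ hbK))
      have hadjpq : G.Adj p q := by
        have h := W3.adj_of_mem_edges hpq
        rw [deleteEdges_adj] at h
        exact h.1
      rcases hqout with hq | hq
      · exact hπ.1 hadjpq.symm hadjab (Fin.lt_def.mpr (by omega)) (Fin.lt_def.mpr (by omega))
          (Fin.lt_def.mpr (by omega)) ⟨Fin.lt_def.mpr (by omega), Fin.lt_def.mpr (by omega)⟩
      · exact hπ.1 hadjab hadjpq (Fin.lt_def.mpr (by omega)) (Fin.lt_def.mpr (by omega))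
          (Fin.lt_def.mpr (by omega)) ⟨Fin.lt_def.mpr (by omega), Fin.lt_def.mpr (by omega)⟩

lemma no_cover_root (hG : G.IsTree) {π : V ≃ Fin (Fintype.card V)}
    (hπ : Projective G r π) (hrw : G.Adj r w) :
    ∀ x y : V, G.Adj x y → x ∈ Kset G r w → y ∈ Kset G r w →
      ¬((π x : ℕ) < (π w : ℕ) ∧ (π w : ℕ) < (π y : ℕ)) := by
  intro x y hadj hxK hyK ⟨h1, h2⟩
  have hrK : r ∉ Kset G r w := not_mem_Kset hG hrw
  have hrx : (π r : ℕ) ≠ (π x : ℕ) := fun hc => hrK ((π.injective (Fin.ext hc)) ▸ hxK)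
  have hry : (π r : ℕ) ≠ (π y : ℕ) := fun hc => hrK ((π.injective (Fin.ext hc)) ▸ hyK)
  rcases lt_trichotomy (π r : ℕ) (π x : ℕ) with hr1 | hr1 | hr1
  · exact hπ.1 hrw hadj (Fin.lt_def.mpr (by omega)) (Fin.lt_def.mpr (by omega))
      (Fin.lt_def.mpr (by omega)) ⟨Fin.lt_def.mpr (by omega), Fin.lt_def.mpr (by omega)⟩
  · exact hrx hr1
  · rcases lt_trichotomy (π r : ℕ) (π y : ℕ) with hr2 | hr2 | hr2
    · exact hrK (Kset_convex hG hπ hrw x y r hxK hyK (by omega) (by omega))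
    · exact hry hr2
    · exact hπ.1 hadj hrw.symm (Fin.lt_def.mpr (by omega)) (Fin.lt_def.mpr (by omega))
        (Fin.lt_def.mpr (by omega)) ⟨Fin.lt_def.mpr (by omega), Fin.lt_def.mpr (by omega)⟩

/-! #### The abstract domination lemma -/

lemma sum_le_prefix {k : ℕ} (s : Fin k → ℕ) (smono : ∀ i j : Fin k, i ≤ j → s j ≤ s i)
    {t : ℕ} (F : Finset (Fin k)) (hF : F.card ≤ t) :
    ∑ j ∈ F, s j ≤ ∑ i ∈ Finset.univ.filter (fun i : Fin k => (i : ℕ) < t), s i := by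
  classical
  have hmk : F.card ≤ k := by
    have := F.card_le_univ
    simpa using this
  have hsum : ∑ j ∈ F, s j = ∑ i : Fin F.card, s (F.orderEmbOfFin rfl i) := by
    refine (Finset.sum_bij (fun (i : Fin F.card) _ => F.orderEmbOfFin rfl i) ?_ ?_ ?_ ?_).symm
    · intro i _
      exact Finset.orderEmbOfFin_mem F rfl i
    · intro i _ j _ h
      exact (F.orderEmbOfFin rfl).injective h
    · intro j hj
      have : j ∈ Set.range (F.orderEmbOfFin rfl) := by
        rw [Finset.range_orderEmbOfFin]
        exact hj
      obtain ⟨i, hi⟩ := this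
      exact ⟨i, Finset.mem_univ i, hi⟩
    · intro i _
      rfl
  have hle : ∀ p : ℕ, ∀ hp : p < F.card, p ≤ ((F.orderEmbOfFin rfl ⟨p, hp⟩ : Fin k) : ℕ) := by
    intro p
    induction p with
    | zero => intro hp; exact Nat.zero_le _
    | succ q ihq =>
      intro hp
      have hq : q < F.card := by omega
      have h1 := ihq hq
      have h2 : F.orderEmbOfFin rfl ⟨q, hq⟩ < F.orderEmbOfFin rfl ⟨q + 1, hp⟩ := by
        rw [OrderEmbedding.lt_iff_lt]
        exact Fin.mk_lt_mk.mpr (by omega)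
      rw [Fin.lt_def] at h2
      omega
  rw [hsum]
  have step1 : ∑ i : Fin F.card, s (F.orderEmbOfFin rfl i)
      ≤ ∑ i : Fin F.card, s ⟨(i : ℕ), lt_of_le_of_lt (hle i i.isLt) (F.orderEmbOfFin rfl i).isLt⟩ := by
    apply Finset.sum_le_sum
    intro i _
    exact smono _ _ (hle i i.isLt)
  refine step1.trans ?_
  have step2 : ∑ i : Fin F.card,
      s ⟨(i : ℕ), lt_of_le_of_lt (hle i i.isLt) (F.orderEmbOfFin rfl i).isLt⟩
      = ∑ i ∈ Finset.univ.filter (fun i : Fin k => (i : ℕ) < F.card), s i := by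
    refine Finset.sum_bij
      (fun (i : Fin F.card) _ =>
        (⟨(i : ℕ), lt_of_le_of_lt (hle i i.isLt) (F.orderEmbOfFin rfl i).isLt⟩ : Fin k))
      ?_ ?_ ?_ ?_
    · intro i _
      simp
    · intro i _ j _ h
      simp only [Fin.mk.injEq] at h
      exact Fin.ext h
    · intro j hj
      simp only [Finset.mem_filter, Finset.mem_univ, true_and] at hj
      exact ⟨⟨(j : ℕ), hj⟩, Finset.mem_univ _, Fin.ext rfl⟩
    · intro i _
      rfl
  rw [step2]
  apply Finset.sum_le_sum_of_subset
  intro i hi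
  simp only [Finset.mem_filter, Finset.mem_univ, true_and] at hi ⊢
  omega

noncomputable def topt {k : ℕ} (s : Fin k → ℕ) (t : ℕ) (B : Finset (Fin k)) : ℕ :=
  (B.powerset.filter (fun F => F.card ≤ t)).sup (fun F => ∑ j ∈ F, s j)

lemma le_topt {k : ℕ} (s : Fin k → ℕ) {t : ℕ} {B F : Finset (Fin k)}
    (h1 : F ⊆ B) (h2 : F.card ≤ t) : ∑ j ∈ F, s j ≤ topt s t B :=
  Finset.le_sup (f := fun F => ∑ j ∈ F, s j) (by
    simp only [Finset.mem_filter, Finset.mem_powerset]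
    exact ⟨h1, h2⟩)

lemma topt_le {k : ℕ} (s : Fin k → ℕ) {t : ℕ} {B : Finset (Fin k)} {X : ℕ}
    (h : ∀ F, F ⊆ B → F.card ≤ t → ∑ j ∈ F, s j ≤ X) : topt s t B ≤ X := by
  apply Finset.sup_le
  intro F hF
  simp only [Finset.mem_filter, Finset.mem_powerset] at hF
  exact h F hF.1 hF.2

lemma topt_mono {k : ℕ} (s : Fin k → ℕ) (t : ℕ) {B B' : Finset (Fin k)} (h : B ⊆ B') :
    topt s t B ≤ topt s t B' := by
  apply topt_le
  intro F h1 h2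
  exact le_topt s (h1.trans h) h2

lemma absdom {k : ℕ} (s : Fin k → ℕ) (smono : ∀ i j : Fin k, i ≤ j → s j ≤ s i)
    (L : Fin k → ℕ) (T : Fin k → Finset (Fin k))
    (hL : ∀ i, L i ≤ ∑ j ∈ T i, s j)
    (hext : ∀ B : Finset (Fin k), B.Nonempty → ∃ j ∈ B, ∀ i ∈ B, i ≠ j → j ∉ T i) :
    ∑ i, L i ≤ ∑ i : Fin k, (k - (i : ℕ)) * s i := by
  classical
  have aux : ∀ (m : ℕ) (B : Finset (Fin k)), B.card = m →
      (∑ i ∈ B, ∑ j ∈ T i ∩ B, s j) ≤ ∑ t ∈ Finset.range m, topt s (t + 1) B := by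
    intro m
    induction m with
    | zero =>
      intro B hB
      rw [Finset.card_eq_zero] at hB
      subst hB
      simp
    | succ n ihn =>
      intro B hB
      have hBne : B.Nonempty := by
        rw [← Finset.card_pos, hB]
        omega
      obtain ⟨j₀, hj₀B, hj₀⟩ := hext B hBne
      have hsplit : ∑ i ∈ B, ∑ j ∈ T i ∩ B, s j
          = (∑ i ∈ B.erase j₀, ∑ j ∈ T i ∩ B, s j) + ∑ j ∈ T j₀ ∩ B, s j :=
        (Finset.sum_erase_add B _ hj₀B).symm
      have hTsame : ∀ i ∈ B.erase j₀, T i ∩ B = T i ∩ B.erase j₀ := by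
        intro i hi
        ext x
        simp only [Finset.mem_inter, Finset.mem_erase]
        constructor
        · rintro ⟨h1, h2⟩
          refine ⟨h1, ?_, h2⟩
          rintro rfl
          exact hj₀ i (Finset.mem_of_mem_erase hi) (Finset.ne_of_mem_erase hi) h1
        · tauto
      have hstep1 : ∑ j ∈ T j₀ ∩ B, s j ≤ topt s (n + 1) B :=
        le_topt s Finset.inter_subset_right
          ((Finset.card_le_card Finset.inter_subset_right).trans_eq hB)
      have hstep2 : ∑ i ∈ B.erase j₀, ∑ j ∈ T i ∩ B, s j
          ≤ ∑ t ∈ Finset.range n, topt s (t + 1) B := by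
        have e1 : ∑ i ∈ B.erase j₀, ∑ j ∈ T i ∩ B, s j
            = ∑ i ∈ B.erase j₀, ∑ j ∈ T i ∩ B.erase j₀, s j :=
          Finset.sum_congr rfl (fun i hi => by rw [hTsame i hi])
        have e2 := ihn (B.erase j₀) (by rw [Finset.card_erase_of_mem hj₀B, hB]; rfl)
        have e3 : ∑ t ∈ Finset.range n, topt s (t + 1) (B.erase j₀)
            ≤ ∑ t ∈ Finset.range n, topt s (t + 1) B :=
          Finset.sum_le_sum (fun t _ => topt_mono s _ (Finset.erase_subset _ _))
        omega
      rw [Finset.sum_range_succ]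
      omega
  have h1 : ∑ i, L i ≤ ∑ i ∈ Finset.univ, ∑ j ∈ T i ∩ Finset.univ, s j := by
    apply Finset.sum_le_sum
    intro i _
    rw [Finset.inter_univ]
    exact hL i
  have h2 := aux k Finset.univ (by simp)
  have h3 : ∀ t : ℕ, topt s (t + 1) Finset.univ
      ≤ ∑ i ∈ Finset.univ.filter (fun i : Fin k => (i : ℕ) < t + 1), s i := by
    intro t
    apply topt_le
    intro F _ hF
    exact sum_le_prefix s smono F hF
  have h4 : ∑ t ∈ Finset.range k, topt s (t + 1) Finset.univ
      ≤ ∑ t ∈ Finset.range k,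
          ∑ i ∈ Finset.univ.filter (fun i : Fin k => (i : ℕ) < t + 1), s i :=
    Finset.sum_le_sum (fun t _ => h3 t)
  have h5 : ∑ t ∈ Finset.range k,
      ∑ i ∈ Finset.univ.filter (fun i : Fin k => (i : ℕ) < t + 1), s i
      = ∑ i : Fin k, (k - (i : ℕ)) * s i := by
    have e1 : ∀ t, ∑ i ∈ Finset.univ.filter (fun i : Fin k => (i : ℕ) < t + 1), s i
        = ∑ i : Fin k, if (i : ℕ) < t + 1 then s i else 0 :=
      fun t => Finset.sum_filter _ _
    simp only [e1]
    rw [Finset.sum_comm]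
    apply Finset.sum_congr rfl
    intro i _
    rw [← Finset.sum_filter]
    rw [Finset.sum_const]
    have e2 : (Finset.range k).filter (fun t => (i : ℕ) < t + 1) = Finset.Ico (i : ℕ) k := by
      ext t
      simp only [Finset.mem_filter, Finset.mem_range, Finset.mem_Ico]
      omega
    rw [e2, Nat.card_Ico, smul_eq_mul]
  omega

/-! #### Upper bound -/

lemma len_bound (hG : G.IsTree) {k : ℕ} {c : Fin k → V} (he : NbrEnum G r k c)
    {π : V ≃ Fin (Fintype.card V)} (hπ : Projective G r π) :
    ∑ i : Fin k, edgeLen π s(r, c i) ≤ ∑ i : Fin k, (k - (i : ℕ)) * compSize G r (c i) := by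
  classical
  set Btwn : Fin k → V → Prop := fun i x =>
    ((π r : ℕ) < (π x : ℕ) ∧ (π x : ℕ) < (π (c i) : ℕ)) ∨
    ((π (c i) : ℕ) < (π x : ℕ) ∧ (π x : ℕ) < (π r : ℕ)) with hBdef
  set T : Fin k → Finset (Fin k) := fun i =>
    Finset.univ.filter (fun j => j = i ∨ ∀ x ∈ Kset G r (c j), Btwn i x) with hTdef
  have hiT : ∀ i, i ∈ T i := by
    intro i
    simp only [hTdef, Finset.mem_filter, Finset.mem_univ, true_and]
    exact Or.inl trivial
  apply absdom (fun i => compSize G r (c i)) (fun i j hij => he.mono i j hij)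
    (fun i => edgeLen π s(r, c i)) T
  · intro i
    set Bt : Finset V := Finset.univ.filter (Btwn i) with hBt
    have hne : (π r : ℕ) ≠ (π (c i) : ℕ) :=
      fun hc => (he.adj i).ne (π.injective (Fin.ext hc))
    have hcard : edgeLen π s(r, c i) = Bt.card + 1 := by
      have hbij : Bt.card = (Finset.Ioo (min (π r : ℕ) (π (c i) : ℕ))
          (max (π r : ℕ) (π (c i) : ℕ))).card := by
        refine Finset.card_bij (fun x _ => (π x : ℕ)) ?_ ?_ ?_
        · intro x hx
          simp only [hBt, Finset.mem_filter, Finset.mem_univ, true_and, hBdef] at hx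
          simp only [Finset.mem_Ioo]
          rcases hx with ⟨h1, h2⟩ | ⟨h1, h2⟩ <;>
            constructor <;> omega
        · intro x _ y _ hxy
          exact π.injective (Fin.ext hxy)
        · intro t ht
          simp only [Finset.mem_Ioo] at ht
          have htlt : t < Fintype.card V := by
            have h1 := (π r).isLt
            have h2 := (π (c i)).isLt
            omega
          refine ⟨π.symm ⟨t, htlt⟩, ?_, by simp⟩
          simp only [hBt, Finset.mem_filter, Finset.mem_univ, true_and, hBdef]
          have heq : (π (π.symm ⟨t, htlt⟩) : ℕ) = t := by simp
          rw [heq]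
          omega
      simp only [edgeLen, Sym2.lift_mk]
      rw [hbij, Nat.card_Ioo]
      omega
    have hsub : Bt ⊆ (T i).biUnion (fun j => (Kset G r (c j)).toFinset) := by
      intro x hx
      simp only [hBt, Finset.mem_filter, Finset.mem_univ, true_and] at hx
      have hxr : x ≠ r := by
        rintro rfl
        rcases hx with ⟨h1, _⟩ | ⟨_, h2⟩ <;> omega
      obtain ⟨w', hw', hxw⟩ := exists_mem_Kset hG hxr
      obtain ⟨j, rfl⟩ := he.surj w' hw'
      simp only [Finset.mem_biUnion]
      refine ⟨j, ?_, Set.mem_toFinset.mpr hxw⟩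
      simp only [hTdef, Finset.mem_filter, Finset.mem_univ, true_and]
      by_cases hji : j = i
      · exact Or.inl hji
      · refine Or.inr ?_
        intro x' hx'
        by_contra hx'n
        have hrKj : r ∉ Kset G r (c j) := not_mem_Kset hG (he.adj j)
        have hciKj : c i ∉ Kset G r (c j) := by
          intro hmem
          exact Kset_disjoint hG (he.adj j) (he.adj i)
            (fun hc => hji (he.inj hc)) hmem (mem_Kset_self G r (c i))
        have hx'r : (π x' : ℕ) ≠ (π r : ℕ) :=
          fun hc => hrKj ((π.injective (Fin.ext hc)) ▸ hx')
        have hx'c : (π x' : ℕ) ≠ (π (c i) : ℕ) :=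
          fun hc => hciKj ((π.injective (Fin.ext hc)) ▸ hx')
        simp only [hBdef] at hx hx'n
        have hcases : (((π x' : ℕ) < (π r : ℕ) ∧ (π r : ℕ) < (π x : ℕ)) ∨
            ((π x : ℕ) < (π r : ℕ) ∧ (π r : ℕ) < (π x' : ℕ))) ∨
            (((π x' : ℕ) < (π (c i) : ℕ) ∧ (π (c i) : ℕ) < (π x : ℕ)) ∨
            ((π x : ℕ) < (π (c i) : ℕ) ∧ (π (c i) : ℕ) < (π x' : ℕ))) := by
          omega
        have hconv := Kset_convex hG hπ (he.adj j)
        rcases hcases with (⟨h1, h2⟩ | ⟨h1, h2⟩) | (⟨h1, h2⟩ | ⟨h1, h2⟩)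
        · exact hrKj (hconv x' x r hx' hxw h1 h2)
        · exact hrKj (hconv x x' r hxw hx' h1 h2)
        · exact hciKj (hconv x' x (c i) hx' hxw h1 h2)
        · exact hciKj (hconv x x' (c i) hxw hx' h1 h2)
    have hci : c i ∉ Bt := by
      simp only [hBt, Finset.mem_filter, Finset.mem_univ, true_and, hBdef]
      omega
    have h1 : insert (c i) Bt ⊆ (T i).biUnion (fun j => (Kset G r (c j)).toFinset) := by
      refine Finset.insert_subset ?_ hsub
      exact Finset.mem_biUnion.mpr ⟨i, hiT i, Set.mem_toFinset.mpr (mem_Kset_self G r (c i))⟩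
    have h2 := Finset.card_le_card h1
    rw [Finset.card_insert_of_notMem hci] at h2
    have h3 := h2.trans Finset.card_biUnion_le
    have h4 : ∑ j ∈ T i, ((Kset G r (c j)).toFinset).card
        = ∑ j ∈ T i, compSize G r (c j) :=
      Finset.sum_congr rfl (fun j _ => by rw [Set.toFinset_card, ← compSize_eq_card])
    omega
  · intro B hBne
    have hU : (B.biUnion (fun j => (Kset G r (c j)).toFinset)).Nonempty := by
      obtain ⟨j, hj⟩ := hBne
      exact ⟨c j, Finset.mem_biUnion.mpr ⟨j, hj, Set.mem_toFinset.mpr (mem_Kset_self G r (c j))⟩⟩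
    obtain ⟨xs, hxsU, hxsmax⟩ := Finset.exists_max_image _
      (fun x => ((π x : ℕ) - (π r : ℕ)) + ((π r : ℕ) - (π x : ℕ))) hU
    obtain ⟨js, hjsB, hxsK⟩ := Finset.mem_biUnion.mp hxsU
    refine ⟨js, hjsB, ?_⟩
    intro i hiB hne hmem
    simp only [hTdef, Finset.mem_filter, Finset.mem_univ, true_and] at hmem
    rcases hmem with h | h
    · exact hne h.symm
    · have hbtw := h xs (Set.mem_toFinset.mp hxsK)
      have hciU : c i ∈ B.biUnion (fun j => (Kset G r (c j)).toFinset) :=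
        Finset.mem_biUnion.mpr ⟨i, hiB, Set.mem_toFinset.mpr (mem_Kset_self G r (c i))⟩
      have hmax := hxsmax (c i) hciU
      simp only [hBdef] at hbtw
      omega

lemma cost_le (hG : G.IsTree) {k : ℕ} {c : Fin k → V} (he : NbrEnum G r k c)
    {π : V ≃ Fin (Fintype.card V)} (hπ : Projective G r π) :
    cost G π ≤ (∑ i, subMax G r (c i)) + ∑ i : Fin k, (k - (i : ℕ)) * compSize G r (c i) := by
  classical
  rw [cost_decomp hG he π]
  refine add_le_add ?_ (len_bound hG he hπ)
  refine Finset.sum_le_sum ?_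
  intro i _
  obtain ⟨σ, hσ⟩ := exists_subarr π (Kset G r (c i)) (Kset_convex hG hπ (he.adj i))
  have hdist : ∀ a b : (Kset G r (c i)),
      ((σ a : ℤ) - (σ b : ℤ)).natAbs = ((π a.1 : ℤ) - (π b.1 : ℤ)).natAbs :=
    fun a b => (hσ a b).2.1
  rw [← cost_subarr G π σ hdist]
  refine le_csSup (cost_bdd _ _) ⟨σ, ⟨?_, ?_⟩, rfl⟩
  · intro a b a' b' h1 h2 h3 h4 h5 hcc
    have l3 := ((hσ a b).1).mp (Fin.lt_def.mp h3)
    have l4 := ((hσ a' b').1).mp (Fin.lt_def.mp h4)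
    have l5 := ((hσ a a').1).mp (Fin.lt_def.mp h5)
    have l6 := ((hσ a' b).1).mp (Fin.lt_def.mp hcc.1)
    have l7 := ((hσ b b').1).mp (Fin.lt_def.mp hcc.2)
    have hadjab : G.Adj a.1 b.1 := h1
    have hadjab' : G.Adj a'.1 b'.1 := h2
    exact hπ.1 hadjab hadjab' (Fin.lt_def.mpr l3) (Fin.lt_def.mpr l4) (Fin.lt_def.mpr l5)
      ⟨Fin.lt_def.mpr l6, Fin.lt_def.mpr l7⟩
  · intro a b hab hcc
    have hadjab : G.Adj a.1 b.1 := hab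
    have l1 := ((hσ a ⟨c i, mem_Kset_self G r (c i)⟩).1).mp (Fin.lt_def.mp hcc.1)
    have l2 := ((hσ ⟨c i, mem_Kset_self G r (c i)⟩ b).1).mp (Fin.lt_def.mp hcc.2)
    exact no_cover_root hG hπ (he.adj i) a.1 b.1 hadjab a.2 b.2 ⟨l1, l2⟩

/-! #### Reversal -/

lemma rev_arr (G : SimpleGraph V) (r : V) (π : V ≃ Fin (Fintype.card V))
    (hπ : Projective G r π) :
    ∃ ρ : V ≃ Fin (Fintype.card V), Projective G r ρ ∧ cost G ρ = cost G π ∧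
      (ρ r : ℕ) = (Fintype.card V) - 1 - (π r : ℕ) := by
  classical
  refine ⟨π.trans (Fin.revPerm), ⟨?_, ?_⟩, ?_, ?_⟩
  · intro a b a' b' h1 h2 h3 h4 h5 hcc
    have hval : ∀ x : V, ((π.trans Fin.revPerm) x : ℕ)
        = Fintype.card V - ((π x : ℕ) + 1) := fun x => Fin.val_rev (π x)
    have ia := (π a).isLt
    have ib := (π b).isLt
    have ia' := (π a').isLt
    have ib' := (π b').isLt
    rw [Fin.lt_def, hval, hval] at h3 h4 h5
    obtain ⟨h6, h7⟩ := hcc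
    rw [Fin.lt_def, hval, hval] at h6 h7
    exact hπ.1 h2.symm h1.symm (Fin.lt_def.mpr (by omega)) (Fin.lt_def.mpr (by omega))
      (Fin.lt_def.mpr (by omega)) ⟨Fin.lt_def.mpr (by omega), Fin.lt_def.mpr (by omega)⟩
  · intro a b hab hcc
    have hval : ∀ x : V, ((π.trans Fin.revPerm) x : ℕ)
        = Fintype.card V - ((π x : ℕ) + 1) := fun x => Fin.val_rev (π x)
    have ia := (π a).isLt
    have ib := (π b).isLt
    have ir := (π r).isLt
    obtain ⟨h1, h2⟩ := hcc
    rw [Fin.lt_def, hval, hval] at h1 h2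
    exact hπ.2 hab.symm ⟨Fin.lt_def.mpr (by omega), Fin.lt_def.mpr (by omega)⟩
  · rw [cost_eq_sum, cost_eq_sum]
    apply Finset.sum_congr rfl
    intro e _
    induction e using Sym2.ind with
    | _ a b =>
      simp only [edgeLen, Sym2.lift_mk]
      have hva : ((π.trans Fin.revPerm) a : ℕ) = Fintype.card V - ((π a : ℕ) + 1) :=
        Fin.val_rev (π a)
      have hvb : ((π.trans Fin.revPerm) b : ℕ) = Fintype.card V - ((π b : ℕ) + 1) :=
        Fin.val_rev (π b)
      have ia := (π a).isLt
      have ib := (π b).isLt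
      omega
  · have : ((π.trans Fin.revPerm) r : ℕ) = Fintype.card V - ((π r : ℕ) + 1) :=
      Fin.val_rev (π r)
    have ir := (π r).isLt
    omega

/-! #### Gluing (lower bound) -/

lemma glue (hG : G.IsTree) {k : ℕ} {c : Fin k → V} (he : NbrEnum G r k c)
    (σ : ∀ i : Fin k, (Kset G r (c i)) ≃ Fin (Fintype.card (Kset G r (c i))))
    (hσ : ∀ i, Projective (G.induce (Kset G r (c i))) ⟨c i, mem_Kset_self _ _ _⟩ (σ i))
    (hlast : ∀ i, ((σ i ⟨c i, mem_Kset_self _ _ _⟩ : ℕ)) + 1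
        = Fintype.card (Kset G r (c i))) :
    ∃ π : V ≃ Fin (Fintype.card V), Projective G r π ∧ (π r : ℕ) = 0 ∧
      cost G π = (∑ i, cost (G.induce (Kset G r (c i))) (σ i))
        + ∑ i : Fin k, ((k : ℕ) - (i : ℕ)) * compSize G r (c i) := by
  classical
  set si : Fin k → ℕ := fun i => compSize G r (c i) with hsi
  have hsicard : ∀ i, si i = Fintype.card (Kset G r (c i)) :=
    fun i => compSize_eq_card G r (c i)
  have hsipos : ∀ i, 1 ≤ si i := by
    intro i
    rw [hsicard]
    exact Fintype.card_pos_iff.mpr ⟨⟨c i, mem_Kset_self G r (c i)⟩⟩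
  set off : Fin k → ℕ := fun i => 1 + ∑ j ∈ Finset.univ.filter (fun j => j < i), si j with hoff
  have hofflast : ∀ i, off i + si i = 1 + ∑ j ∈ Finset.univ.filter (fun j => j ≤ i), si j := by
    intro i
    have hins : Finset.univ.filter (fun j => j ≤ i)
        = insert i (Finset.univ.filter (fun j => j < i)) := by
      ext j
      simp only [Finset.mem_filter, Finset.mem_univ, true_and, Finset.mem_insert]
      constructor
      · intro h
        rcases eq_or_lt_of_le h with h' | h'
        · exact Or.inl h'
        · exact Or.inr h'
      · rintro (rfl | h)
        · exact le_refl _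
        · exact le_of_lt h
    rw [hins, Finset.sum_insert (by simp)]
    simp only [hoff]
    omega
  have hoffmono : ∀ i j : Fin k, i < j → off i + si i ≤ off j := by
    intro i j hij
    rw [hofflast i]
    have hsubset : Finset.univ.filter (fun j' => j' ≤ i)
        ⊆ Finset.univ.filter (fun j' => j' < j) := by
      intro x
      simp only [Finset.mem_filter, Finset.mem_univ, true_and]
      intro hx
      exact lt_of_le_of_lt hx hij
    have hmono := Finset.sum_le_sum_of_subset (f := si) hsubset
    simp only [hoff]
    omega
  have hofftot : ∀ i, off i + si i ≤ Fintype.card V := by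
    intro i
    rw [hofflast i]
    have h1 : ∑ j ∈ Finset.univ.filter (fun j => j ≤ i), si j ≤ ∑ j, si j :=
      Finset.sum_le_sum_of_subset (Finset.filter_subset _ _)
    have h2 := sum_compSize hG he
    simp only [hsi] at h1 ⊢
    omega
  have hcov : ∀ x : V, x ≠ r → ∃ i, x ∈ Kset G r (c i) := by
    intro x hx
    obtain ⟨w', hw', hxw⟩ := exists_mem_Kset hG hx
    obtain ⟨i, rfl⟩ := he.surj w' hw'
    exact ⟨i, hxw⟩
  have huniq : ∀ (x : V) (i j : Fin k), x ∈ Kset G r (c i) → x ∈ Kset G r (c j) → i = j := by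
    intro x i j hxi hxj
    by_contra hij
    exact Kset_disjoint hG (he.adj i) (he.adj j) (fun hc => hij (he.inj hc)) hxi hxj
  set f : V → ℕ := fun x =>
    if hx : x = r then 0
    else off (hcov x hx).choose + (σ (hcov x hx).choose ⟨x, (hcov x hx).choose_spec⟩ : ℕ)
    with hf
  have hroot : f r = 0 := by simp [hf]
  have hfval : ∀ (i : Fin k) (x : V) (hx : x ∈ Kset G r (c i)),
      f x = off i + (σ i ⟨x, hx⟩ : ℕ) := by
    intro i x hx
    have hxr : x ≠ r := fun hc => not_mem_Kset hG (he.adj i) (hc ▸ hx)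
    have hspec := (hcov x hxr).choose_spec
    have hchoose := huniq x _ i hspec hx
    simp only [hf, dif_neg hxr]
    subst hchoose
    rfl
  have hσlt : ∀ (i : Fin k) (x : V) (hx : x ∈ Kset G r (c i)),
      (σ i ⟨x, hx⟩ : ℕ) < si i := by
    intro i x hx
    have h := (σ i ⟨x, hx⟩).isLt
    exact lt_of_lt_of_eq h (hsicard i).symm
  have hspan : ∀ (i : Fin k) (x : V) (hx : x ∈ Kset G r (c i)),
      off i ≤ f x ∧ f x < off i + si i := by
    intro i x hx
    rw [hfval i x hx]
    have := hσlt i x hx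
    omega
  have hflt : ∀ x : V, f x < Fintype.card V := by
    intro x
    by_cases hx : x = r
    · rw [hx, hroot]
      have : Nonempty V := ⟨r⟩
      exact Fintype.card_pos
    · obtain ⟨i, hxi⟩ := hcov x hx
      have := (hspan i x hxi).2
      have := hofftot i
      omega
  have hoffpos : ∀ i, 1 ≤ off i := by
    intro i
    simp only [hoff]
    omega
  have hfinj : Function.Injective f := by
    intro x y hxy
    by_cases hx : x = r <;> by_cases hy : y = r
    · rw [hx, hy]
    · exfalso
      obtain ⟨j, hyj⟩ := hcov y hy
      have h1 := (hspan j y hyj).1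
      have h2 := hoffpos j
      rw [hx, hroot] at hxy
      omega
    · exfalso
      obtain ⟨i, hxi⟩ := hcov x hx
      have h1 := (hspan i x hxi).1
      have h2 := hoffpos i
      rw [hy, hroot] at hxy
      omega
    · obtain ⟨i, hxi⟩ := hcov x hx
      obtain ⟨j, hyj⟩ := hcov y hy
      rcases lt_trichotomy i j with hij | hij | hij
      · exfalso
        have h1 := (hspan i x hxi).2
        have h2 := (hspan j y hyj).1
        have h3 := hoffmono i j hij
        omega
      · subst hij
        rw [hfval i x hxi, hfval i y hyj] at hxy
        have : σ i ⟨x, hxi⟩ = σ i ⟨y, hyj⟩ := Fin.ext (by omega)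
        have := (σ i).injective this
        exact congrArg Subtype.val this
      · exfalso
        have h1 := (hspan j y hyj).2
        have h2 := (hspan i x hxi).1
        have h3 := hoffmono j i hij
        omega
  set π' : V ≃ Fin (Fintype.card V) := Equiv.ofBijective (fun x => ⟨f x, hflt x⟩)
    ((Fintype.bijective_iff_injective_and_card _).mpr
      ⟨fun x y h => hfinj (congrArg Fin.val h), by simp⟩) with hπ'
  have hπ'val : ∀ x, (π' x : ℕ) = f x := fun x => rfl
  have hcases : ∀ a b : V, G.Adj a b → f a < f b →
      (a = r ∧ ∃ i, b = c i) ∨ (∃ i, a ∈ Kset G r (c i) ∧ b ∈ Kset G r (c i)) := by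
    intro a b hab hfab
    by_cases ha : a = r
    · subst ha
      obtain ⟨i, rfl⟩ := he.surj b hab
      exact Or.inl ⟨rfl, i, rfl⟩
    · by_cases hb : b = r
      · exfalso
        subst hb
        rw [hroot] at hfab
        omega
      · obtain ⟨i, hai⟩ := hcov a ha
        exact Or.inr ⟨i, hai, mem_Kset_of_adj hai ha hab hb⟩
  have hcival : ∀ i, f (c i) = off i + si i - 1 := by
    intro i
    rw [hfval i (c i) (mem_Kset_self G r (c i))]
    have h1 := hlast i
    have h2 := hsicard i
    omega
  have hplanar : Planar G π' := by
    intro a b a' b' h1 h2 h3 h4 h5 hcc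
    obtain ⟨h6, h7⟩ := hcc
    rw [Fin.lt_def] at h3 h4 h5 h6 h7
    rw [hπ'val, hπ'val] at h3 h4 h5 h6 h7
    rcases hcases a b h1 h3 with ⟨rfl, i, rfl⟩ | ⟨i, hai, hbi⟩
    · -- (a,b) is a root edge (r, c i)
      rcases hcases a' b' h2 h4 with ⟨rfl, j, rfl⟩ | ⟨j, ha'j, hb'j⟩
      · rw [hroot] at h5
        omega
      · -- root edge vs block edge in K j
        have hsa' := hspan j a' ha'j
        have hsb' := hspan j b' hb'j
        have hfc := hcival i
        rcases lt_trichotomy i j with hij | hij | hij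
        · have := hoffmono i j hij
          have := hsipos i
          omega
        · subst hij
          omega
        · have := hoffmono j i hij
          have := hsipos j
          omega
    · rcases hcases a' b' h2 h4 with ⟨rfl, j, rfl⟩ | ⟨j, ha'j, hb'j⟩
      · -- block edge vs root edge: f a' = f r = 0, but f a < f a'
        rw [hroot] at h5
        omega
      · rcases lt_trichotomy i j with hij | hij | hij
        · have hsb := hspan i b hbi
          have hsa' := hspan j a' ha'j
          have := hoffmono i j hij
          omega
        · subst hij
          -- same block: use planarity of σ i
          have hadj1 : (G.induce (Kset G r (c i))).Adj ⟨a, hai⟩ ⟨b, hbi⟩ := h1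
          have hadj2 : (G.induce (Kset G r (c i))).Adj ⟨a', ha'j⟩ ⟨b', hb'j⟩ := h2
          have ea := hfval i a hai
          have eb := hfval i b hbi
          have ea' := hfval i a' ha'j
          have eb' := hfval i b' hb'j
          exact (hσ i).1 hadj1 hadj2 (Fin.lt_def.mpr (by omega)) (Fin.lt_def.mpr (by omega))
            (Fin.lt_def.mpr (by omega)) ⟨Fin.lt_def.mpr (by omega), Fin.lt_def.mpr (by omega)⟩
        · have hsa := hspan i a hai
          have hsb := hspan i b hbi
          have hsa' := hspan j a' ha'j
          have := hoffmono j i hij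
          omega
  refine ⟨π', ⟨hplanar, ?_⟩, ?_, ?_⟩
  · intro a b hab hcc
    obtain ⟨hc1, hc2⟩ := hcc
    rw [Fin.lt_def] at hc1 hc2
    rw [hπ'val, hπ'val] at hc1
    rw [hroot] at hc1
    omega
  · rw [hπ'val, hroot]
  · rw [cost_decomp hG he π']
    congr 1
    · apply Finset.sum_congr rfl
      intro i _
      refine (cost_subarr G π' (σ i) ?_).symm
      intro x y
      rw [hπ'val, hπ'val, hfval i x.1 x.2, hfval i y.1 y.2]
      have h1 : (σ i ⟨x.1, x.2⟩) = σ i x := by congr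
      have h2 : (σ i ⟨y.1, y.2⟩) = σ i y := by congr
      rw [h1, h2]
      omega
    · have hlen : ∀ i, edgeLen π' s(r, c i)
          = ∑ j ∈ Finset.univ.filter (fun j => j ≤ i), si j := by
        intro i
        simp only [edgeLen, Sym2.lift_mk]
        have h1 : (π' r : ℕ) = 0 := by rw [hπ'val, hroot]
        have h2 : (π' (c i) : ℕ) = off i + si i - 1 := by rw [hπ'val, hcival i]
        have h3 := hofflast i
        have h4 := hsipos i
        have h5 := hoffpos i
        omega
      rw [Finset.sum_congr rfl (fun i _ => hlen i)]
      have e1 : ∀ i : Fin k, ∑ j ∈ Finset.univ.filter (fun j => j ≤ i), si j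
          = ∑ j : Fin k, if j ≤ i then si j else 0 := fun i => Finset.sum_filter _ _
      simp only [e1]
      rw [Finset.sum_comm]
      have hcardfilter : ∀ j : Fin k,
          (Finset.univ.filter (fun i : Fin k => j ≤ i)).card = k - (j : ℕ) := by
        intro j
        rw [← Nat.card_Ico (j : ℕ) k]
        refine Finset.card_bij (fun i _ => (i : ℕ)) ?_ ?_ ?_
        · intro i hi
          simp only [Finset.mem_filter, Finset.mem_univ, true_and] at hi
          simp only [Finset.mem_Ico]
          exact ⟨hi, i.isLt⟩
        · intro i _ j' _ h
          exact Fin.ext h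
        · intro t ht
          simp only [Finset.mem_Ico] at ht
          refine ⟨⟨t, ht.2⟩, ?_, rfl⟩
          simp only [Finset.mem_filter, Finset.mem_univ, true_and]
          exact ht.1
      apply Finset.sum_congr rfl
      intro j _
      rw [← Finset.sum_filter, Finset.sum_const, hcardfilter j, smul_eq_mul]

/-! #### Existence of sorted enumeration -/

lemma exists_enum (G : SimpleGraph V) (r : V) : ∃ k c, NbrEnum G r k c := by
  classical
  set l0 := (G.neighborSet r).toFinset.toList with hl0
  set cmp : V → V → Bool := fun a b => decide (compSize G r b ≤ compSize G r a) with hcmp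
  set l := l0.mergeSort cmp with hl
  have hperm : l.Perm l0 := List.mergeSort_perm l0 cmp
  have hnodup : l.Nodup := hperm.nodup_iff.mpr (Finset.nodup_toList _)
  have hmem : ∀ x, x ∈ l ↔ G.Adj r x := by
    intro x
    rw [hperm.mem_iff, hl0, Finset.mem_toList, Set.mem_toFinset, mem_neighborSet]
  have hsorted : List.Pairwise (fun a b => cmp a b = true) l := by
    refine List.pairwise_mergeSort ?_ ?_ l0
    · intro a b c hab hbc
      simp only [hcmp, decide_eq_true_eq] at hab hbc ⊢
      omega
    · intro a b
      simp only [hcmp, Bool.or_eq_true, decide_eq_true_eq]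
      omega
  refine ⟨l.length, fun i => l.get i, ?_, ?_, ?_, ?_⟩
  · exact List.nodup_iff_injective_get.mp hnodup
  · intro i
    exact (hmem _).mp (l.get_mem i)
  · intro x hx
    exact List.mem_iff_get.mp ((hmem x).mpr hx)
  · intro i j hij
    rcases eq_or_lt_of_le hij with rfl | h
    · exact le_refl _
    · have := (List.pairwise_iff_get.mp hsorted) i j h
      simpa [hcmp] using this

/-! #### The main recurrence -/

theorem recurMain (N : ℕ) :
    ∀ (V : Type) [Fintype V] (G : SimpleGraph V), G.IsTree →
    ∀ (r : V) (k : ℕ) (c : Fin k → V), NbrEnum G r k c → Fintype.card V ≤ N →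
      (maxProj G r = (∑ i, subMax G r (c i))
          + ∑ i : Fin k, (k - (i : ℕ)) * compSize G r (c i))
      ∧ ∃ π : V ≃ Fin (Fintype.card V),
          Projective G r π ∧ cost G π = maxProj G r ∧ (π r : ℕ) = 0 := by
  induction N with
  | zero =>
    intro V _ G hG r k c he hcard
    exfalso
    have hne : Nonempty V := hG.isConnected.nonempty
    have := Fintype.card_pos (α := V)
    omega
  | succ N ih =>
    intro V _ G hG r k c he hcard
    classical
    have hblocktree : ∀ i : Fin k, (G.induce (Kset G r (c i))).IsTree :=
      fun i => isTree_induce_Kset hG (he.adj i)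
    have hblockcard : ∀ i : Fin k, Fintype.card (Kset G r (c i)) ≤ N := by
      intro i
      have h1 := sum_compSize hG he
      have h2 := compSize_eq_card G r (c i)
      have h3 : compSize G r (c i) ≤ ∑ j, compSize G r (c j) :=
        Finset.single_le_sum (f := fun j => compSize G r (c j))
          (fun j _ => Nat.zero_le _) (Finset.mem_univ i)
      omega
    have hblock : ∀ i : Fin k, ∃ σi : (Kset G r (c i)) ≃ Fin (Fintype.card (Kset G r (c i))),
        Projective (G.induce (Kset G r (c i))) ⟨c i, mem_Kset_self G r (c i)⟩ σi ∧
        cost (G.induce (Kset G r (c i))) σi = subMax G r (c i) ∧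
        ((σi ⟨c i, mem_Kset_self G r (c i)⟩ : ℕ)) + 1 = Fintype.card (Kset G r (c i)) := by
      intro i
      obtain ⟨k', c', he'⟩ := exists_enum (G.induce (Kset G r (c i)))
        ⟨c i, mem_Kset_self G r (c i)⟩
      obtain ⟨-, π0, hπ0proj, hπ0cost, hπ0root⟩ :=
        ih _ (G.induce (Kset G r (c i))) (hblocktree i) _ k' c' he' (hblockcard i)
      obtain ⟨ρ, hρproj, hρcost, hρroot⟩ := rev_arr _ _ π0 hπ0proj
      refine ⟨ρ, hρproj, by rw [hρcost, hπ0cost]; rfl, ?_⟩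
      have hpos : 0 < Fintype.card (Kset G r (c i)) :=
        Fintype.card_pos_iff.mpr ⟨⟨c i, mem_Kset_self G r (c i)⟩⟩
      rw [hρroot, hπ0root]
      omega
    choose σs hσproj hσcost hσlast using hblock
    obtain ⟨π', hπ'proj, hπ'root, hπ'cost⟩ := glue hG he σs hσproj hσlast
    have hπ'costR : cost G π'
        = (∑ i, subMax G r (c i)) + ∑ i : Fin k, (k - (i : ℕ)) * compSize G r (c i) := by
      rw [hπ'cost]
      congr 1
      exact Finset.sum_congr rfl (fun i _ => hσcost i)
    have hmem : ((∑ i, subMax G r (c i)) + ∑ i : Fin k, (k - (i : ℕ)) * compSize G r (c i))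
        ∈ {n | ∃ π : V ≃ Fin (Fintype.card V), Projective G r π ∧ cost G π = n} :=
      ⟨π', hπ'proj, hπ'costR⟩
    have hub : ∀ x ∈ {n | ∃ π : V ≃ Fin (Fintype.card V), Projective G r π ∧ cost G π = n},
        x ≤ (∑ i, subMax G r (c i)) + ∑ i : Fin k, (k - (i : ℕ)) * compSize G r (c i) := by
      rintro x ⟨π, hπ, rfl⟩
      exact cost_le hG he hπ
    have hmax : maxProj G r
        = (∑ i, subMax G r (c i)) + ∑ i : Fin k, (k - (i : ℕ)) * compSize G r (c i) :=
      le_antisymm (csSup_le ⟨_, hmem⟩ hub) (le_csSup (cost_bdd G r) hmem)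
    exact ⟨hmax, π', hπ'proj, by rw [hπ'costR, hmax], hπ'root⟩

/-! #### Final algebra helper -/

lemma wdiff {k : ℕ} (s : Fin (k + 1) → ℤ) (j : Fin (k + 1)) :
    (∑ i : Fin (k + 1), ((k : ℤ) + 1 - (i : ℕ)) * s i)
      - (∑ i : Fin k, ((k : ℤ) - (i : ℕ)) * s (j.succAbove i))
    = ((k : ℤ) + 1 - (j : ℕ)) * s j + ∑ i ∈ Finset.Iio j, s i := by
  rw [Fin.sum_univ_succAbove (fun i : Fin (k + 1) => ((k : ℤ) + 1 - (i : ℕ)) * s i) j]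
  have hsplit : (∑ i : Fin k, ((k : ℤ) + 1 - ((j.succAbove i : Fin (k + 1)) : ℕ))
        * s (j.succAbove i))
      - ∑ i : Fin k, ((k : ℤ) - (i : ℕ)) * s (j.succAbove i)
      = ∑ i : Fin k, ((((k : ℤ) + 1 - ((j.succAbove i : Fin (k + 1)) : ℕ))
          - ((k : ℤ) - (i : ℕ))) * s (j.succAbove i)) := by
    rw [← Finset.sum_sub_distrib]
    apply Finset.sum_congr rfl
    intro i _
    ring
  have hterm : ∀ i : Fin k, ((((k : ℤ) + 1 - ((j.succAbove i : Fin (k + 1)) : ℕ))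
      - ((k : ℤ) - (i : ℕ))) * s (j.succAbove i))
      = if (i : ℕ) < (j : ℕ) then s (j.succAbove i) else 0 := by
    intro i
    by_cases h : (i : ℕ) < (j : ℕ)
    · have hval : ((j.succAbove i : Fin (k + 1)) : ℕ) = (i : ℕ) := by
        rw [Fin.succAbove_of_castSucc_lt j i (by
          rw [Fin.lt_def]
          simpa using h)]
        simp
      rw [hval, if_pos h]
      have hcoef : ((k : ℤ) + 1 - (i : ℕ)) - ((k : ℤ) - (i : ℕ)) = 1 := by ring
      rw [hcoef, one_mul]
    · have hval : ((j.succAbove i : Fin (k + 1)) : ℕ) = (i : ℕ) + 1 := by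
        rw [Fin.succAbove_of_le_castSucc j i (by
          rw [Fin.le_def]
          simpa using Nat.le_of_not_lt h)]
        simp
      rw [hval, if_neg h]
      have hcoef : ((k : ℤ) + 1 - (((i : ℕ) + 1 : ℕ) : ℤ)) - ((k : ℤ) - (i : ℕ)) = 0 := by
        push_cast
        ring
      rw [show (((i : ℕ) + 1 : ℕ) : ℤ) = ((i : ℕ) : ℤ) + 1 from by push_cast; ring] at hcoef
      rw [show ((((i : ℕ) + 1) : ℕ) : ℤ) = ((i : ℕ) : ℤ) + 1 from by push_cast; ring]
      rw [hcoef, zero_mul]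
  have hbij : ∑ i ∈ Finset.univ.filter (fun i : Fin k => (i : ℕ) < (j : ℕ)),
      s (j.succAbove i) = ∑ m ∈ Finset.Iio j, s m := by
    refine Finset.sum_bij (fun i _ => j.succAbove i) ?_ ?_ ?_ ?_
    · intro i hi
      simp only [Finset.mem_filter, Finset.mem_univ, true_and] at hi
      simp only [Finset.mem_Iio]
      rw [Fin.lt_def]
      rw [Fin.succAbove_of_castSucc_lt j i (by rw [Fin.lt_def]; simpa using hi)]
      simpa using hi
    · intro i _ i' _ h
      exact Fin.succAbove_right_injective h
    · intro m hm
      simp only [Finset.mem_Iio] at hm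
      have hmk : (m : ℕ) < k := by
        have h1 := Fin.lt_def.mp hm
        have h2 := j.isLt
        omega
      refine ⟨⟨(m : ℕ), hmk⟩, ?_, ?_⟩
      · simp only [Finset.mem_filter, Finset.mem_univ, true_and]
        exact Fin.lt_def.mp hm
      · show j.succAbove ⟨(m : ℕ), hmk⟩ = m
        rw [Fin.succAbove_of_castSucc_lt j _ (by
          rw [Fin.lt_def]
          simpa using Fin.lt_def.mp hm)]
        exact Fin.ext (by simp)
    · intro i _
      rfl
  calc (((k : ℤ) + 1 - (j : ℕ)) * s j
        + ∑ i : Fin k, ((k : ℤ) + 1 - ((j.succAbove i : Fin (k + 1)) : ℕ)) * s (j.succAbove i))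
      - ∑ i : Fin k, ((k : ℤ) - (i : ℕ)) * s (j.succAbove i)
      = ((k : ℤ) + 1 - (j : ℕ)) * s j
        + ((∑ i : Fin k, ((k : ℤ) + 1 - ((j.succAbove i : Fin (k + 1)) : ℕ)) * s (j.succAbove i))
          - ∑ i : Fin k, ((k : ℤ) - (i : ℕ)) * s (j.succAbove i)) := by ring
    _ = ((k : ℤ) + 1 - (j : ℕ)) * s j
        + ∑ i : Fin k, if (i : ℕ) < (j : ℕ) then s (j.succAbove i) else 0 := by
          rw [hsplit]
          congr 1
          exact Finset.sum_congr rfl (fun i _ => hterm i)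
    _ = ((k : ℤ) + 1 - (j : ℕ)) * s j + ∑ i ∈ Finset.Iio j, s i := by
          rw [← Finset.sum_filter, hbij]

end MaxProjAux

open MaxProjAux

theorem maxProj_diff_adjacent (n : ℕ) (G : SimpleGraph (Fin n)) (hG : G.IsTree)
    (u v : Fin n) (huv : G.Adj u v)
    (ku kv : ℕ) (cu : Fin ku → Fin n) (cv : Fin kv → Fin n)
    (hcu_inj : Function.Injective cu) (hcv_inj : Function.Injective cv)
    (hcu_adj : ∀ i, G.Adj u (cu i)) (hcv_adj : ∀ i, G.Adj v (cv i))
    (hcu_surj : ∀ x, G.Adj u x → ∃ i, cu i = x)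
    (hcv_surj : ∀ x, G.Adj v x → ∃ i, cv i = x)
    (hcu_mono : ∀ i j : Fin ku, i ≤ j → compSize G u (cu j) ≤ compSize G u (cu i))
    (hcv_mono : ∀ i j : Fin kv, i ≤ j → compSize G v (cv j) ≤ compSize G v (cv i))
    (ju : Fin ku) (hju : cu ju = v) (jv : Fin kv) (hjv : cv jv = u) :
    (maxProj G v : ℤ) - (maxProj G u : ℤ) =
      (((kv - ((jv : ℕ) + 1)) * compSize G v u
          + ∑ i ∈ Finset.Iic jv, compSize G v (cv i) : ℕ) : ℤ)
      - (((ku - ((ju : ℕ) + 1)) * compSize G u v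
          + ∑ i ∈ Finset.Iic ju, compSize G u (cu i) : ℕ) : ℤ) := by
  classical
  obtain ⟨ku', rfl⟩ : ∃ m, ku = m + 1 := by
    refine ⟨ku - 1, ?_⟩
    have : ku ≠ 0 := fun h => (h ▸ ju).elim0
    omega
  obtain ⟨kv', rfl⟩ : ∃ m, kv = m + 1 := by
    refine ⟨kv - 1, ?_⟩
    have : kv ≠ 0 := fun h => (h ▸ jv).elim0
    omega
  have heu : NbrEnum G u (ku' + 1) cu := ⟨hcu_inj, hcu_adj, hcu_surj, hcu_mono⟩
  have hev : NbrEnum G v (kv' + 1) cv := ⟨hcv_inj, hcv_adj, hcv_surj, hcv_mono⟩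
  have hN : Fintype.card (Fin n) ≤ n := by simp
  obtain ⟨hrecu, -⟩ := recurMain n (Fin n) G hG u _ cu heu hN
  obtain ⟨hrecv, -⟩ := recurMain n (Fin n) G hG v _ cv hev hN
  -- subtree enumeration on the v-side block (component of v w.r.t. u)
  have hcardle : ∀ (S : Set (Fin n)), Fintype.card S ≤ n := fun S =>
    (Fintype.card_le_of_injective _ Subtype.val_injective).trans (by simp)
  have hnev : ∀ i : Fin kv', cv (jv.succAbove i) ≠ u := by
    intro i hc
    have h2 : cv (jv.succAbove i) = cv jv := hc.trans hjv.symm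
    exact Fin.succAbove_ne jv i (hcv_inj h2)
  have hmemv : ∀ i : Fin kv', cv (jv.succAbove i) ∈ Kset G u v := fun i =>
    mem_Kset_of_adj (mem_Kset_self G u v) huv.ne' (hcv_adj _) (hnev i)
  have hneu : ∀ i : Fin ku', cu (ju.succAbove i) ≠ v := by
    intro i hc
    have h2 : cu (ju.succAbove i) = cu ju := hc.trans hju.symm
    exact Fin.succAbove_ne ju i (hcu_inj h2)
  have hmemu : ∀ i : Fin ku', cu (ju.succAbove i) ∈ Kset G v u := fun i =>
    mem_Kset_of_adj (mem_Kset_self G v u) huv.symm.ne' (hcu_adj _) (hneu i)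
  -- NbrEnum for the block of v
  have hBv : NbrEnum (G.induce (Kset G u v)) ⟨v, mem_Kset_self G u v⟩ kv'
      (fun i => ⟨cv (jv.succAbove i), hmemv i⟩) := by
    refine ⟨?_, ?_, ?_, ?_⟩
    · intro i i' h
      exact Fin.succAbove_right_injective (hcv_inj (congrArg Subtype.val h))
    · intro i
      exact hcv_adj _
    · rintro ⟨x, hxK⟩ hx
      have hadj : G.Adj v x := hx
      obtain ⟨i0, rfl⟩ := hcv_surj x hadj
      have hi0 : i0 ≠ jv := by
        rintro rfl
        rw [hjv] at hxK
        exact not_mem_Kset hG huv hxK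
      obtain ⟨i, rfl⟩ := Fin.exists_succAbove_eq hi0
      exact ⟨i, Subtype.ext rfl⟩
    · intro i i' hii
      rw [compSize_induce hG huv (hcv_adj _) (hnev _) (hmemv _),
        compSize_induce hG huv (hcv_adj _) (hnev _) (hmemv _)]
      exact hcv_mono _ _ ((Fin.strictMono_succAbove jv).monotone hii)
  have hBu : NbrEnum (G.induce (Kset G v u)) ⟨u, mem_Kset_self G v u⟩ ku'
      (fun i => ⟨cu (ju.succAbove i), hmemu i⟩) := by
    refine ⟨?_, ?_, ?_, ?_⟩
    · intro i i' h
      exact Fin.succAbove_right_injective (hcu_inj (congrArg Subtype.val h))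
    · intro i
      exact hcu_adj _
    · rintro ⟨x, hxK⟩ hx
      have hadj : G.Adj u x := hx
      obtain ⟨i0, rfl⟩ := hcu_surj x hadj
      have hi0 : i0 ≠ ju := by
        rintro rfl
        rw [hju] at hxK
        exact not_mem_Kset hG huv.symm hxK
      obtain ⟨i, rfl⟩ := Fin.exists_succAbove_eq hi0
      exact ⟨i, Subtype.ext rfl⟩
    · intro i i' hii
      rw [compSize_induce hG huv.symm (hcu_adj _) (hneu _) (hmemu _),
        compSize_induce hG huv.symm (hcu_adj _) (hneu _) (hmemu _)]
      exact hcu_mono _ _ ((Fin.strictMono_succAbove ju).monotone hii)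
  obtain ⟨hrecBv, -⟩ := recurMain n _ (G.induce (Kset G u v)) (isTree_induce_Kset hG huv)
    _ kv' _ hBv (hcardle _)
  obtain ⟨hrecBu, -⟩ := recurMain n _ (G.induce (Kset G v u)) (isTree_induce_Kset hG huv.symm)
    _ ku' _ hBu (hcardle _)
  -- rewrite transported quantities in the block recurrences
  rw [show maxProj (G.induce (Kset G u v)) ⟨v, mem_Kset_self G u v⟩ = subMax G u v from rfl]
    at hrecBv
  rw [show maxProj (G.induce (Kset G v u)) ⟨u, mem_Kset_self G v u⟩ = subMax G v u from rfl]
    at hrecBu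
  have hrecBv' : subMax G u v
      = (∑ i : Fin kv', subMax G v (cv (jv.succAbove i)))
      + ∑ i : Fin kv', (kv' - (i : ℕ)) * compSize G v (cv (jv.succAbove i)) := by
    rw [hrecBv]
    congr 1
    · exact Finset.sum_congr rfl (fun i _ =>
        subMax_induce hG huv (hcv_adj _) (hnev i) (hmemv i))
    · exact Finset.sum_congr rfl (fun i _ => by
        rw [compSize_induce hG huv (hcv_adj _) (hnev i) (hmemv i)])
  have hrecBu' : subMax G v u
      = (∑ i : Fin ku', subMax G u (cu (ju.succAbove i)))
      + ∑ i : Fin ku', (ku' - (i : ℕ)) * compSize G u (cu (ju.succAbove i)) := by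
    rw [hrecBu]
    congr 1
    · exact Finset.sum_congr rfl (fun i _ =>
        subMax_induce hG huv.symm (hcu_adj _) (hneu i) (hmemu i))
    · exact Finset.sum_congr rfl (fun i _ => by
        rw [compSize_induce hG huv.symm (hcu_adj _) (hneu i) (hmemu i)])
  -- split the top-level sums at ju / jv
  rw [Fin.sum_univ_succAbove (fun i => subMax G u (cu i)) ju] at hrecu
  rw [Fin.sum_univ_succAbove (fun i => subMax G v (cv i)) jv] at hrecv
  rw [hju] at hrecu
  rw [hjv] at hrecv
  -- move everything to ℤ
  have castW : ∀ (k : ℕ) (g : Fin k → ℕ),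
      ((∑ i : Fin k, (k - (i : ℕ)) * g i : ℕ) : ℤ)
        = ∑ i : Fin k, ((k : ℤ) - (i : ℕ)) * (g i : ℤ) := by
    intro k g
    rw [Nat.cast_sum]
    apply Finset.sum_congr rfl
    intro i _
    rw [Nat.cast_mul, Nat.cast_sub (le_of_lt i.isLt)]
  have castW1 : ∀ (k : ℕ) (g : Fin (k + 1) → ℕ),
      ((∑ i : Fin (k + 1), (k + 1 - (i : ℕ)) * g i : ℕ) : ℤ)
        = ∑ i : Fin (k + 1), ((k : ℤ) + 1 - (i : ℕ)) * (g i : ℤ) := by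
    intro k g
    rw [castW (k + 1) g]
    apply Finset.sum_congr rfl
    intro i _
    push_cast
    ring
  have hEu : (maxProj G u : ℤ) = (subMax G u v : ℤ)
      + (∑ i : Fin ku', (subMax G u (cu (ju.succAbove i)) : ℤ))
      + ∑ i : Fin (ku' + 1), ((ku' : ℤ) + 1 - (i : ℕ)) * (compSize G u (cu i) : ℤ) := by
    rw [hrecu]
    push_cast [castW1 ku' (fun i => compSize G u (cu i))]
    ring
  have hEv : (maxProj G v : ℤ) = (subMax G v u : ℤ)
      + (∑ i : Fin kv', (subMax G v (cv (jv.succAbove i)) : ℤ))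
      + ∑ i : Fin (kv' + 1), ((kv' : ℤ) + 1 - (i : ℕ)) * (compSize G v (cv i) : ℤ) := by
    rw [hrecv]
    push_cast [castW1 kv' (fun i => compSize G v (cv i))]
    ring
  have hEBv : (subMax G u v : ℤ)
      = (∑ i : Fin kv', (subMax G v (cv (jv.succAbove i)) : ℤ))
      + ∑ i : Fin kv', ((kv' : ℤ) - (i : ℕ)) * (compSize G v (cv (jv.succAbove i)) : ℤ) := by
    rw [hrecBv']
    push_cast [castW kv' (fun i => compSize G v (cv (jv.succAbove i)))]
    ring
  have hEBu : (subMax G v u : ℤ)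
      = (∑ i : Fin ku', (subMax G u (cu (ju.succAbove i)) : ℤ))
      + ∑ i : Fin ku', ((ku' : ℤ) - (i : ℕ)) * (compSize G u (cu (ju.succAbove i)) : ℤ) := by
    rw [hrecBu']
    push_cast [castW ku' (fun i => compSize G u (cu (ju.succAbove i)))]
    ring
  have hwv := wdiff (fun i => (compSize G v (cv i) : ℤ)) jv
  have hwu := wdiff (fun i => (compSize G u (cu i) : ℤ)) ju
  -- Iic sums
  have hIicv : ∑ i ∈ Finset.Iic jv, (compSize G v (cv i) : ℤ)
      = (compSize G v (cv jv) : ℤ) + ∑ i ∈ Finset.Iio jv, (compSize G v (cv i) : ℤ) := by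
    have hins : Finset.Iic jv = insert jv (Finset.Iio jv) := by
      ext i
      simp only [Finset.mem_Iic, Finset.mem_insert, Finset.mem_Iio]
      constructor
      · intro h
        rcases eq_or_lt_of_le h with h' | h'
        · exact Or.inl h'
        · exact Or.inr h'
      · rintro (rfl | h)
        · exact le_refl _
        · exact le_of_lt h
    rw [hins, Finset.sum_insert (by simp)]
  have hIicu : ∑ i ∈ Finset.Iic ju, (compSize G u (cu i) : ℤ)
      = (compSize G u (cu ju) : ℤ) + ∑ i ∈ Finset.Iio ju, (compSize G u (cu i) : ℤ) := by
    have hins : Finset.Iic ju = insert ju (Finset.Iio ju) := by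
      ext i
      simp only [Finset.mem_Iic, Finset.mem_insert, Finset.mem_Iio]
      constructor
      · intro h
        rcases eq_or_lt_of_le h with h' | h'
        · exact Or.inl h'
        · exact Or.inr h'
      · rintro (rfl | h)
        · exact le_refl _
        · exact le_of_lt h
    rw [hins, Finset.sum_insert (by simp)]
  -- RHS casts
  have hjvle : (jv : ℕ) ≤ kv' := by
    have := jv.isLt
    omega
  have hjule : (ju : ℕ) ≤ ku' := by
    have := ju.isLt
    omega
  have hRv : (((kv' + 1 - ((jv : ℕ) + 1)) * compSize G v u
      + ∑ i ∈ Finset.Iic jv, compSize G v (cv i) : ℕ) : ℤ)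
      = ((kv' : ℤ) - (jv : ℕ)) * (compSize G v u : ℤ)
        + ∑ i ∈ Finset.Iic jv, (compSize G v (cv i) : ℤ) := by
    push_cast [Nat.cast_sub hjvle]
    ring
  have hRu : (((ku' + 1 - ((ju : ℕ) + 1)) * compSize G u v
      + ∑ i ∈ Finset.Iic ju, compSize G u (cu i) : ℕ) : ℤ)
      = ((ku' : ℤ) - (ju : ℕ)) * (compSize G u v : ℤ)
        + ∑ i ∈ Finset.Iic ju, (compSize G u (cu i) : ℤ) := by
    push_cast [Nat.cast_sub hjule]
    ring
  rw [hRv, hRu, hIicv, hIicu]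
  have hcvjv : (compSize G v (cv jv) : ℤ) = (compSize G v u : ℤ) := by rw [hjv]
  have hcuju : (compSize G u (cu ju) : ℤ) = (compSize G u v : ℤ) := by rw [hju]
  rw [hcvjv] at hwv hIicv
  rw [hcuju] at hwu hIicu
  linarith [hEu, hEv, hEBv, hEBu, hwv, hwu]
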